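/- arXiv:2506.18826 — 6 statements merged into one kernel-verified Lean document; each statement's English description precedes it below -/
import Mathlib

section
/- Let $k$ be a field and $A$ a $\mathbb{Z}$-graded $k$-subalgebra of $k[t,t^{-1}]$ containing both an element of positive degree and an element of negative degree. Then $A$ is a principal ideal domain. -/
open scoped TensorProduct

set_option synthInstance.maxHeartbeats 1000000
set_option maxHeartbeats 2000000


/-- A `ℤ`-graded `R`-subalgebra of the Laurent polynomial ring `R[t, t⁻¹]` (deg t = 1):
a subalgebra spanned by the homogeneous elements it contains. -/
def IsGradedLaurentSubalgebra (R : Type*) [CommRing R]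
    (A : Subalgebra R (LaurentPolynomial R)) : Prop :=
  ∀ f ∈ A, ∀ m : ℤ, LaurentPolynomial.C (AddMonoidAlgebra.coeff f m) * LaurentPolynomial.T m ∈ A

/-- A homogeneous ideal of a graded subalgebra of `R[t, t⁻¹]` : an ideal closed under
taking homogeneous components. -/
def IsHomogeneousIdeal (R : Type*) [CommRing R] (A : Subalgebra R (LaurentPolynomial R))
    (I : Ideal A) : Prop :=
  ∀ f : A, f ∈ I → ∀ m : ℤ,
    ∀ h : LaurentPolynomial.C (AddMonoidAlgebra.coeff (f : LaurentPolynomial R) m) * LaurentPolynomial.T m ∈ A,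
      (⟨_, h⟩ : A) ∈ I

open LaurentPolynomial


lemma locPID {R S : Type*} [CommRing R] [CommRing S] (M : Submonoid R) [Algebra R S]
    [IsLocalization M S] [IsPrincipalIdealRing R] : IsPrincipalIdealRing S := by
  constructor
  intro J
  obtain ⟨a, ha⟩ := (IsPrincipalIdealRing.principal (J.comap (algebraMap R S)))
  refine ⟨⟨algebraMap R S a, ?_⟩⟩
  conv_lhs => rw [← IsLocalization.map_comap M S J]
  rw [Ideal.under, ha]
  simp [Ideal.map_span, Ideal.submodule_span_eq]

instance lautPID {k : Type*} [Field k] : IsPrincipalIdealRing (LaurentPolynomial k) :=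
  haveI := LaurentPolynomial.isLocalization (R := k)
  locPID (Submonoid.powers (Polynomial.X : Polynomial k))

/-- A graded `k`-subalgebra of `k[t, t⁻¹]` containing an element of positive degree
and an element of negative degree is a principal ideal domain. -/
theorem statement1 (k : Type*) [Field k] (A : Subalgebra k (LaurentPolynomial k))
    (hA : IsGradedLaurentSubalgebra k A)
    (hpos : ∃ f ∈ A, ∃ m : ℤ, 0 < m ∧ AddMonoidAlgebra.coeff f m ≠ 0)
    (hneg : ∃ f ∈ A, ∃ m : ℤ, m < 0 ∧ AddMonoidAlgebra.coeff f m ≠ 0) :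
    IsPrincipalIdealRing A := by
  classical
  have hC : ∀ c : k, (LaurentPolynomial.C c : LaurentPolynomial k) ∈ A := by
    intro c
    rw [C_eq_algebraMap]
    exact A.algebraMap_mem c
  -- from a nonzero homogeneous component, T m ∈ A
  have hT : ∀ (m : ℤ) (c : k), c ≠ 0 → LaurentPolynomial.C c * T m ∈ A →
      (T m : LaurentPolynomial k) ∈ A := by
    intro m c hc h
    have h2 := A.mul_mem (hC c⁻¹) h
    rwa [← mul_assoc, ← map_mul, inv_mul_cancel₀ hc, map_one, one_mul] at h2
  -- the set of exponents
  set Sset : Set ℤ := {m : ℤ | (T m : LaurentPolynomial k) ∈ A} with hSset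
  have hzero : (0 : ℤ) ∈ Sset := by
    show (T 0 : LaurentPolynomial k) ∈ A
    rw [T_zero]; exact A.one_mem
  have hadd : ∀ {x y : ℤ}, x ∈ Sset → y ∈ Sset → x + y ∈ Sset := by
    intro x y hx hy
    show (T (x+y) : LaurentPolynomial k) ∈ A
    rw [T_add]; exact A.mul_mem hx hy
  have hnsmul : ∀ (n : ℕ) (x : ℤ), x ∈ Sset → (n : ℤ) * x ∈ Sset := by
    intro n x hx
    show (T ((n:ℤ)*x) : LaurentPolynomial k) ∈ A
    rw [← T_pow]; exact A.pow_mem hx n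
  -- positive and negative elements
  obtain ⟨f, hf, a, ha0, hfa⟩ := hpos
  obtain ⟨e, he, b, hb0, heb⟩ := hneg
  have haS : a ∈ Sset := hT a (AddMonoidAlgebra.coeff f a) hfa (hA f hf a)
  have hbS : b ∈ Sset := hT b (AddMonoidAlgebra.coeff e b) heb (hA e he b)
  -- c = a * (-b) > 0 and both c, -c ∈ Sset
  set c : ℤ := a * (-b) with hc
  have hc0 : 0 < c := mul_pos ha0 (by omega)
  have hcS : c ∈ Sset := by
    have := hnsmul (-b).toNat a haS
    rwa [Int.toNat_of_nonneg (by omega), mul_comm] at this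
  have hncS : -c ∈ Sset := by
    have := hnsmul a.toNat b hbS
    rw [Int.toNat_of_nonneg (by omega)] at this
    have hd : -c = a * b := by ring
    rwa [← hd] at this
  have hneg' : ∀ x ∈ Sset, -x ∈ Sset := by
    intro x hx
    have h1 : (c - 1 : ℤ) * x ∈ Sset := by
      have := hnsmul (c-1).toNat x hx
      rwa [Int.toNat_of_nonneg (by omega)] at this
    rcases le_or_gt 0 x with hx0 | hx0
    · have h2 : x * (-c) ∈ Sset := by
        have := hnsmul x.toNat (-c) hncS
        rwa [Int.toNat_of_nonneg hx0] at this
      have h3 := hadd h1 h2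
      have : (c-1)*x + x*(-c) = -x := by ring
      rwa [this] at h3
    · have h2 : x * (-c) ∈ Sset := by
        have := hnsmul (-x).toNat c hcS
        rw [Int.toNat_of_nonneg (by omega)] at this
        have hd : x * (-c) = -x * c := by ring
        rwa [← hd] at this
      have h3 := hadd h1 h2
      have : (c-1)*x + x*(-c) = -x := by ring
      rwa [this] at h3
  -- S as an AddSubgroup
  set S : AddSubgroup ℤ :=
    { carrier := Sset
      zero_mem' := hzero
      add_mem' := hadd
      neg_mem' := fun hx => hneg' _ hx } with hS
  obtain ⟨g, hg⟩ := Int.subgroup_cyclic S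
  have hg0 : g ≠ 0 := by
    intro h
    have : a ∈ S := haS
    rw [hg, h] at this
    rw [AddSubgroup.mem_closure_singleton] at this
    obtain ⟨n, hn⟩ := this
    simp at hn
    omega
  have hmem : ∀ j : ℤ, (T (g * j) : LaurentPolynomial k) ∈ A := by
    intro j
    have : g * j ∈ S := by
      rw [hg, AddSubgroup.mem_closure_singleton]
      exact ⟨j, by rw [smul_eq_mul, mul_comm]⟩
    exact this
  -- the monoid hom and algebra hom
  set F : Multiplicative ℤ →* A :=
    { toFun := fun x => ⟨T (g * x.toAdd), hmem _⟩
      map_one' := by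
        apply Subtype.ext
        show (T (g * (Multiplicative.toAdd 1)) : LaurentPolynomial k) = 1
        simp [T_zero]
      map_mul' := fun x y => by
        apply Subtype.ext
        show (T (g * (x.toAdd + y.toAdd)) : LaurentPolynomial k) = T (g * x.toAdd) * T (g * y.toAdd)
        rw [mul_add, T_add] } with hF
  set φ : LaurentPolynomial k →ₐ[k] A := AddMonoidAlgebra.lift k A ℤ F with hφ
  -- surjectivity
  have hsurj : Function.Surjective φ := by
    intro z
    have hzB : (z : LaurentPolynomial k) ∈ (φ.range.map A.val) := by
      have hrw : (z : LaurentPolynomial k) =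
          (z : LaurentPolynomial k).coeff.sum fun m cc => AddMonoidAlgebra.single m cc := by
        exact (AddMonoidAlgebra.sum_coeff_single _).symm
      rw [hrw, Finsupp.sum]
      apply Subalgebra.sum_mem
      intro m hm
      rcases eq_or_ne ((z : LaurentPolynomial k).coeff m) 0 with h0 | h0
      · rw [h0, AddMonoidAlgebra.single_zero]
        exact Subalgebra.zero_mem _
      · -- T m ∈ A, so m ∈ S
        have hTm : (T m : LaurentPolynomial k) ∈ A := hT m _ h0 (hA _ z.2 m)
        have hmS : m ∈ S := hTm
        rw [hg, AddSubgroup.mem_closure_singleton] at hmS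
        obtain ⟨j, hj⟩ := hmS
        refine ⟨φ (AddMonoidAlgebra.single j ((z : LaurentPolynomial k).coeff m)), ⟨_, rfl⟩, ?_⟩
        show ((φ (AddMonoidAlgebra.single j ((z : LaurentPolynomial k).coeff m)) : A) : LaurentPolynomial k) = _
        rw [hφ]
        rw [AddMonoidAlgebra.lift_single]
        show ((z : LaurentPolynomial k).coeff m) • (T (g * j) : LaurentPolynomial k) = _
        have hgj : g * j = m := by rw [← hj, smul_eq_mul, mul_comm]
        rw [hgj, T, AddMonoidAlgebra.smul_single]
        simp
    obtain ⟨y, hy, hyz⟩ := hzB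
    obtain ⟨p, hp⟩ := hy
    exact ⟨p, Subtype.ext ((congrArg Subtype.val hp).trans hyz)⟩
  exact IsPrincipalIdealRing.of_surjective (φ : LaurentPolynomial k →+* A) hsurj
end

section
/- Let $R$ be a commutative ring, $P$ a finitely generated projective $R$-module of rank $r \geq 2$, and $I$ an ideal of $R$. Let $\overline{R} = R/\mathrm{Nil}(R)$, $\overline{P} = P/\mathrm{Nil}(R)P$, $\overline{I} = I \cdot \overline{R}$. Then $\mathrm{Um}(R \oplus P, I) = e_1 \cdot \mathrm{ET}(R \oplus P, I)$ if and only if $\mathrm{Um}(\overline{R} \oplus \overline{P}, \overline{I}) = e_1 \cdot \mathrm{ET}(\overline{R} \oplus \overline{P}, \overline{I})$. -/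
open scoped TensorProduct

set_option synthInstance.maxHeartbeats 1000000
set_option maxHeartbeats 2000000


/-- A module has (constant local) rank `r` if its localization at every prime has rank `r`. -/
def HasRank (A : Type*) [CommRing A] (P : Type*) [AddCommGroup P] [Module A P] (r : ℕ) : Prop :=
  ∀ (p : Ideal A) (hp : p.IsPrime),
    letI := hp
    Module.rank (Localization.AtPrime p) (LocalizedModule p.primeCompl P) = r

/-- The group of elementary transvections `ET(A ⊕ P)`, as a submonoid of the linear
endomorphisms of `A × P` (closed under inverses, since the inverse of a transvection
is a transvection). -/
def ETGroup (A : Type*) [CommRing A] (P : Type*) [AddCommGroup P] [Module A P] :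
    Submonoid ((A × P) →ₗ[A] (A × P)) :=
  Submonoid.closure {f | (∃ q : P, ∀ x : A × P, f x = (x.1, x.2 + x.1 • q)) ∨
       (∃ ψ : P →ₗ[A] A, ∀ x : A × P, f x = (x.1 + ψ x.2, x.2))}

/-- The relative group `ET(A ⊕ P, I)` : the normal closure in `ET(A ⊕ P)` of the subgroup
generated by transvections with `q ∈ IP`, `ψ ∈ I·P*`. -/
def ETGroupRel (A : Type*) [CommRing A] (P : Type*) [AddCommGroup P] [Module A P]
    (I : Ideal A) : Submonoid ((A × P) →ₗ[A] (A × P)) :=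
  Submonoid.closure {f | ∃ g h e : (A × P) →ₗ[A] (A × P),
    g ∈ ETGroup A P ∧ h ∈ ETGroup A P ∧ g * h = 1 ∧ h * g = 1 ∧
    e ∈ Submonoid.closure
      {f' | (∃ q ∈ (I • ⊤ : Submodule A P), ∀ x : A × P, f' x = (x.1, x.2 + x.1 • q)) ∨
            (∃ ψ ∈ (I • ⊤ : Submodule A (P →ₗ[A] A)), ∀ x : A × P, f' x = (x.1 + ψ x.2, x.2))} ∧
    f = g * e * h}

/-- `Um(A ⊕ P, I) = (1,0) · ET(A ⊕ P, I)` : every unimodular element of `A ⊕ P` congruent to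
`(1, 0)` modulo `I` can be moved to `(1, 0)` by a relative elementary transvection. -/
def UmTransitive (A : Type*) [CommRing A] (P : Type*) [AddCommGroup P] [Module A P]
    (I : Ideal A) : Prop :=
  ∀ a : A, ∀ p : P, (∃ φ : (A × P) →ₗ[A] A, φ (a, p) = 1) →
    a - 1 ∈ I → p ∈ (I • ⊤ : Submodule A P) →
    ∃ τ ∈ ETGroupRel A P I, τ (a, p) = ((1 : A), (0 : P))



namespace S3aux

variable {R : Type*} [CommRing R] {P : Type*} [AddCommGroup P] [Module R P]

/-- The transvection `(a,p) ↦ (a, p + a • q)`. -/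
def Tmap (q : P) : (R × P) →ₗ[R] (R × P) :=
  (LinearMap.fst R R P).prod ((LinearMap.snd R R P) + (LinearMap.fst R R P).smulRight q)

/-- The transvection `(a,p) ↦ (a + ψ p, p)`. -/
def Smap (ψ : P →ₗ[R] R) : (R × P) →ₗ[R] (R × P) :=
  ((LinearMap.fst R R P) + ψ ∘ₗ (LinearMap.snd R R P)).prod (LinearMap.snd R R P)

@[simp] lemma Tmap_apply (q : P) (x : R × P) : Tmap q x = (x.1, x.2 + x.1 • q) := rfl

@[simp] lemma Smap_apply (ψ : P →ₗ[R] R) (x : R × P) : Smap ψ x = (x.1 + ψ x.2, x.2) := rfl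

lemma Tmap_mul (q q' : P) : (Tmap q * Tmap q' : (R × P) →ₗ[R] (R × P)) = Tmap (q' + q) := by
  apply LinearMap.ext; rintro ⟨a, p⟩
  simp [Tmap, smul_add, add_assoc]

lemma Smap_mul (ψ ψ' : P →ₗ[R] R) :
    (Smap ψ * Smap ψ' : (R × P) →ₗ[R] (R × P)) = Smap (ψ + ψ') := by
  apply LinearMap.ext; rintro ⟨a, p⟩
  simp [Smap, add_assoc]; ring

@[simp] lemma Tmap_zero : (Tmap (0 : P) : (R × P) →ₗ[R] (R × P)) = 1 := by
  apply LinearMap.ext; rintro ⟨a, p⟩; simp [Tmap]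

@[simp] lemma Smap_zero : (Smap (0 : P →ₗ[R] R) : (R × P) →ₗ[R] (R × P)) = 1 := by
  apply LinearMap.ext; rintro ⟨a, p⟩; simp [Smap]

lemma Tmap_inv (q : P) : (Tmap q * Tmap (-q) : (R × P) →ₗ[R] (R × P)) = 1 ∧
    (Tmap (-q) * Tmap q : (R × P) →ₗ[R] (R × P)) = 1 := by
  constructor <;> rw [Tmap_mul] <;> simp

lemma Smap_inv (ψ : P →ₗ[R] R) : (Smap ψ * Smap (-ψ) : (R × P) →ₗ[R] (R × P)) = 1 ∧
    (Smap (-ψ) * Smap ψ : (R × P) →ₗ[R] (R × P)) = 1 := by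
  constructor <;> rw [Smap_mul] <;> simp

lemma Tmap_mem_ET (q : P) : Tmap q ∈ ETGroup R P :=
  Submonoid.subset_closure (Or.inl ⟨q, fun x => rfl⟩)

lemma Smap_mem_ET (ψ : P →ₗ[R] R) : Smap ψ ∈ ETGroup R P :=
  Submonoid.subset_closure (Or.inr ⟨ψ, fun x => rfl⟩)

end S3aux
namespace S3aux

variable {R : Type*} [CommRing R] {P : Type*} [AddCommGroup P] [Module R P]

/-- The generating set of the inner (relative) group. -/
def relSet (R : Type*) [CommRing R] (P : Type*) [AddCommGroup P] [Module R P] (I : Ideal R) :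
    Set ((R × P) →ₗ[R] (R × P)) :=
  {f' | (∃ q ∈ (I • ⊤ : Submodule R P), ∀ x : R × P, f' x = (x.1, x.2 + x.1 • q)) ∨
        (∃ ψ ∈ (I • ⊤ : Submodule R (P →ₗ[R] R)), ∀ x : R × P, f' x = (x.1 + ψ x.2, x.2))}

lemma ETGroupRel_def (I : Ideal R) : ETGroupRel R P I = Submonoid.closure
    {f | ∃ g h e : (R × P) →ₗ[R] (R × P),
      g ∈ ETGroup R P ∧ h ∈ ETGroup R P ∧ g * h = 1 ∧ h * g = 1 ∧
      e ∈ Submonoid.closure (relSet R P I) ∧ f = g * e * h} := rfl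

lemma conj_mem_rel {I : Ideal R} {g h e : (R × P) →ₗ[R] (R × P)} (hg : g ∈ ETGroup R P)
    (hh : h ∈ ETGroup R P) (hgh : g * h = 1) (hhg : h * g = 1)
    (he : e ∈ Submonoid.closure (relSet R P I)) : g * e * h ∈ ETGroupRel R P I := by
  rw [ETGroupRel_def]
  exact Submonoid.subset_closure ⟨g, h, e, hg, hh, hgh, hhg, he, rfl⟩

lemma mem_rel_of_inner {I : Ideal R} {e : (R × P) →ₗ[R] (R × P)}
    (he : e ∈ Submonoid.closure (relSet R P I)) : e ∈ ETGroupRel R P I := by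
  have := conj_mem_rel (one_mem _) (one_mem _) (one_mul 1) (one_mul 1) he
  simpa using this

lemma Tmap_mem_inner {I : Ideal R} {q : P} (hq : q ∈ (I • ⊤ : Submodule R P)) :
    Tmap q ∈ Submonoid.closure (relSet R P I) :=
  Submonoid.subset_closure (Or.inl ⟨q, hq, fun _ => rfl⟩)

lemma Smap_mem_inner {I : Ideal R} {ψ : P →ₗ[R] R}
    (hψ : ψ ∈ (I • ⊤ : Submodule R (P →ₗ[R] R))) :
    Smap ψ ∈ Submonoid.closure (relSet R P I) :=
  Submonoid.subset_closure (Or.inr ⟨ψ, hψ, fun _ => rfl⟩)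

/-- Pairing lemma: a functional in `I • P*` takes values in `I`. -/
lemma pair_mem {I : Ideal R} {ψ : P →ₗ[R] R} (hψ : ψ ∈ (I • ⊤ : Submodule R (P →ₗ[R] R)))
    (x : P) : ψ x ∈ I := by
  refine Submodule.smul_induction_on hψ (fun r hr ψ0 _ => ?_) (fun f g hf hg => ?_)
  · simpa using I.mul_mem_right _ hr
  · simpa using I.add_mem hf hg

/-- Any linear endomorphism of `R × P` preserves the pair of conditions `x.1 ∈ I`, `x.2 ∈ I•P`. -/
lemma comp_mem_of_linear {I : Ideal R} (f : (R × P) →ₗ[R] (R × P)) {x : R × P}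
    (h1 : x.1 ∈ I) (h2 : x.2 ∈ (I • ⊤ : Submodule R P)) :
    (f x).1 ∈ I ∧ (f x).2 ∈ (I • ⊤ : Submodule R P) := by
  have hx : x = x.1 • ((1 : R), (0 : P)) + ((0 : R), x.2) := by
    ext <;> simp
  have key : ∀ m ∈ (I • ⊤ : Submodule R P),
      (f ((0 : R), m)).1 ∈ I ∧ (f ((0 : R), m)).2 ∈ (I • ⊤ : Submodule R P) := by
    intro m hm
    refine Submodule.smul_induction_on hm (fun r hr n _ => ?_) (fun a b ha hb => ?_)
    · have : ((0 : R), r • n) = r • ((0 : R), n) := by ext <;> simp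
      rw [this, map_smul]
      exact ⟨I.mul_mem_right _ hr, Submodule.smul_mem_smul hr trivial⟩
    · have : ((0 : R), a + b) = ((0 : R), a) + ((0 : R), b) := by ext <;> simp
      rw [this, map_add]
      exact ⟨I.add_mem ha.1 hb.1, Submodule.add_mem _ ha.2 hb.2⟩
  have h0 := key x.2 h2
  rw [hx, map_add, map_smul]
  constructor
  · exact I.add_mem (I.mul_mem_right _ h1) h0.1
  · exact Submodule.add_mem _ (Submodule.smul_mem_smul h1 trivial) h0.2

/-- Elements of the inner relative closure are congruent to the identity mod `I`. -/
lemma inner_diff_mem {I : Ideal R} {e : (R × P) →ₗ[R] (R × P)}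
    (he : e ∈ Submonoid.closure (relSet R P I)) : ∀ x : R × P,
    (e x).1 - x.1 ∈ I ∧ (e x).2 - x.2 ∈ (I • ⊤ : Submodule R P) := by
  induction he using Submonoid.closure_induction with
  | mem f hf =>
    intro x
    rcases hf with ⟨q, hq, hf⟩ | ⟨ψ, hψ, hf⟩
    · rw [hf]
      exact ⟨by simpa using I.zero_mem, by simpa using Submodule.smul_mem _ _ hq⟩
    · rw [hf]
      exact ⟨by simpa using pair_mem hψ x.2,
        by simpa using (I • ⊤ : Submodule R P).zero_mem⟩
  | one => intro x; simp
  | mul f g hf hg ihf ihg =>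
    intro x
    have e1 : ((f * g) x).1 - x.1 = ((f (g x)).1 - (g x).1) + ((g x).1 - x.1) := by
      simp [Module.End.mul_apply]
    have e2 : ((f * g) x).2 - x.2 = ((f (g x)).2 - (g x).2) + ((g x).2 - x.2) := by
      simp [Module.End.mul_apply]
    rw [e1, e2]
    exact ⟨I.add_mem (ihf (g x)).1 (ihg x).1, Submodule.add_mem _ (ihf (g x)).2 (ihg x).2⟩

/-- Elements of `ET(R⊕P, I)` are congruent to the identity mod `I`. -/
lemma rel_diff_mem {I : Ideal R} {t : (R × P) →ₗ[R] (R × P)}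
    (ht : t ∈ ETGroupRel R P I) : ∀ x : R × P,
    (t x).1 - x.1 ∈ I ∧ (t x).2 - x.2 ∈ (I • ⊤ : Submodule R P) := by
  rw [ETGroupRel_def] at ht
  induction ht using Submonoid.closure_induction with
  | mem f hf =>
    intro x
    obtain ⟨g, h, e, hg, hh, hgh, hhg, he, rfl⟩ := hf
    have hx : g (h x) = x := by
      have := congrArg (fun u => u x) hgh
      simpa [Module.End.mul_apply] using this
    have key : (g * e * h) x - x = g (e (h x) - h x) := by
      simp only [Module.End.mul_apply, map_sub, hx]
    have hd := inner_diff_mem he (h x)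
    have hc := comp_mem_of_linear (I := I) (x := e (h x) - h x) g (by simpa using hd.1)
      (by simpa using hd.2)
    constructor
    · have : ((g * e * h) x).1 - x.1 = (g (e (h x) - h x)).1 := by
        rw [← key]; rfl
      rw [this]; exact hc.1
    · have : ((g * e * h) x).2 - x.2 = (g (e (h x) - h x)).2 := by
        rw [← key]; rfl
      rw [this]; exact hc.2
  | one => intro x; simp
  | mul f g hf hg ihf ihg =>
    intro x
    have e1 : ((f * g) x).1 - x.1 = ((f (g x)).1 - (g x).1) + ((g x).1 - x.1) := by
      simp [Module.End.mul_apply]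
    have e2 : ((f * g) x).2 - x.2 = ((f (g x)).2 - (g x).2) + ((g x).2 - x.2) := by
      simp [Module.End.mul_apply]
    rw [e1, e2]
    exact ⟨I.add_mem (ihf (g x)).1 (ihg x).1, Submodule.add_mem _ (ihf (g x)).2 (ihg x).2⟩

end S3aux
namespace S3aux

variable {R : Type*} [CommRing R] {P : Type*} [AddCommGroup P] [Module R P]

section Quotient

variable (J : Ideal R)

lemma qsmul (r : R) (p : P) :
    (Ideal.Quotient.mk J r) • (Submodule.Quotient.mk p : P ⧸ (J • ⊤ : Submodule R P)) =
      Submodule.Quotient.mk (r • p) := rfl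

/-- Reduction of a functional `P →ₗ R` to the quotient. -/
noncomputable def barFun (ψ : P →ₗ[R] R) :
    (P ⧸ (J • ⊤ : Submodule R P)) →ₗ[R ⧸ J] (R ⧸ J) := by
  have hle : (J • ⊤ : Submodule R P) ≤ LinearMap.ker ((Algebra.linearMap R (R ⧸ J)) ∘ₗ ψ) := by
    intro p hp
    refine Submodule.smul_induction_on hp (fun r hr n _ => ?_) (fun a b ha hb => ?_)
    · simp only [LinearMap.mem_ker, LinearMap.comp_apply, map_smul, Algebra.linearMap_apply,
        smul_eq_mul, map_mul]
      rw [Algebra.smul_def, Ideal.Quotient.algebraMap_eq,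
        Ideal.Quotient.eq_zero_iff_mem.2 hr, zero_mul]
    · simp only [LinearMap.mem_ker, map_add] at ha hb ⊢
      rw [ha, hb, add_zero]
  exact
  { toFun := Submodule.liftQ _ _ hle
    map_add' := map_add _
    map_smul' := by
      intro c x
      obtain ⟨r, rfl⟩ := Ideal.Quotient.mk_surjective c
      obtain ⟨p, rfl⟩ := Submodule.Quotient.mk_surjective _ x
      rw [qsmul]
      simp only [Submodule.liftQ_apply, LinearMap.comp_apply, map_smul,
        Algebra.linearMap_apply, RingHom.id_apply, smul_eq_mul]
      rw [show (algebraMap R (R ⧸ J)) (ψ p) = Ideal.Quotient.mk J (ψ p) from rfl, ← map_mul]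
      rfl }

@[simp] lemma barFun_mk (ψ : P →ₗ[R] R) (p : P) :
    barFun J ψ (Submodule.Quotient.mk p) = Ideal.Quotient.mk J (ψ p) := rfl

/-- Membership in `I•P` descends to the quotient. -/
lemma mem_smul_top_quot {I : Ideal R} {p : P} (hp : p ∈ (I • ⊤ : Submodule R P)) :
    (Submodule.Quotient.mk p : P ⧸ (J • ⊤ : Submodule R P)) ∈
      ((I.map (Ideal.Quotient.mk J)) • ⊤ :
        Submodule (R ⧸ J) (P ⧸ (J • ⊤ : Submodule R P))) := by
  refine Submodule.smul_induction_on hp (fun r hr n _ => ?_) (fun a b ha hb => ?_)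
  · rw [← qsmul]
    exact Submodule.smul_mem_smul (Ideal.mem_map_of_mem _ hr) trivial
  · rw [Submodule.Quotient.mk_add]
    exact Submodule.add_mem _ ha hb

/-- Members of `Ī•P̄` lift to members of `I•P`. -/
lemma exists_lift_smul_top {I : Ideal R} {pb : P ⧸ (J • ⊤ : Submodule R P)}
    (hpb : pb ∈ ((I.map (Ideal.Quotient.mk J)) • ⊤ :
      Submodule (R ⧸ J) (P ⧸ (J • ⊤ : Submodule R P)))) :
    ∃ p ∈ (I • ⊤ : Submodule R P), Submodule.Quotient.mk p = pb := by
  refine Submodule.smul_induction_on hpb (fun rb hrb nb _ => ?_) (fun a b ha hb => ?_)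
  · obtain ⟨r, hr, rfl⟩ := Ideal.mem_map_iff_of_surjective _ Ideal.Quotient.mk_surjective |>.1 hrb
    obtain ⟨n, rfl⟩ := Submodule.Quotient.mk_surjective _ nb
    exact ⟨r • n, Submodule.smul_mem_smul hr trivial, (qsmul J r n).symm⟩
  · obtain ⟨p, hp, rfl⟩ := ha
    obtain ⟨p', hp', rfl⟩ := hb
    exact ⟨p + p', Submodule.add_mem _ hp hp', (Submodule.Quotient.mk_add _).symm⟩

/-- Functionals on the quotient lift, since `P` is projective. -/
lemma exists_lift_fun [Module.Projective R P]
    (ψb : (P ⧸ (J • ⊤ : Submodule R P)) →ₗ[R ⧸ J] (R ⧸ J)) :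
    ∃ ψ : P →ₗ[R] R, ∀ x : P,
      Ideal.Quotient.mk J (ψ x) = ψb ((Submodule.Quotient.mk x : P ⧸ (J • ⊤ : Submodule R P))) := by
  have hsurj : Function.Surjective (Algebra.linearMap R (R ⧸ J)) := Ideal.Quotient.mk_surjective
  set χ : P →ₗ[R] (R ⧸ J) :=
  { toFun := fun x => ψb (Submodule.Quotient.mk x)
    map_add' := by
      intro a b
      show ψb (Submodule.Quotient.mk (a + b)) = _
      rw [Submodule.Quotient.mk_add, map_add]
    map_smul' := by
      intro r x
      show ψb (Submodule.Quotient.mk (r • x)) = r • ψb (Submodule.Quotient.mk x)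
      rw [← qsmul, map_smul, smul_eq_mul, Algebra.smul_def, Ideal.Quotient.algebraMap_eq] } with hχ
  obtain ⟨ψ, hψ⟩ := Module.projective_lifting_property (Algebra.linearMap R (R ⧸ J)) χ hsurj
  refine ⟨ψ, fun x => ?_⟩
  have := congrArg (fun f => f x) hψ
  simpa [hχ] using this

/-- Relative functionals on the quotient lift to relative functionals. -/
lemma exists_lift_relFun [Module.Projective R P] {I : Ideal R}
    {ψb : (P ⧸ (J • ⊤ : Submodule R P)) →ₗ[R ⧸ J] (R ⧸ J)}
    (hψb : ψb ∈ ((I.map (Ideal.Quotient.mk J)) • ⊤ :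
      Submodule (R ⧸ J) ((P ⧸ (J • ⊤ : Submodule R P)) →ₗ[R ⧸ J] (R ⧸ J)))) :
    ∃ ψ ∈ (I • ⊤ : Submodule R (P →ₗ[R] R)), ∀ x : P,
      Ideal.Quotient.mk J (ψ x) = ψb ((Submodule.Quotient.mk x : P ⧸ (J • ⊤ : Submodule R P))) := by
  refine Submodule.smul_induction_on hψb (fun rb hrb fb _ => ?_) (fun a b ha hb => ?_)
  · obtain ⟨r, hr, rfl⟩ := Ideal.mem_map_iff_of_surjective _ Ideal.Quotient.mk_surjective |>.1 hrb
    obtain ⟨f, hf⟩ := exists_lift_fun J fb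
    refine ⟨r • f, Submodule.smul_mem_smul hr trivial, fun x => ?_⟩
    rw [LinearMap.smul_apply, smul_eq_mul, map_mul, hf, LinearMap.smul_apply, smul_eq_mul]
  · obtain ⟨f, hf, hfp⟩ := ha
    obtain ⟨g, hg, hgp⟩ := hb
    refine ⟨f + g, Submodule.add_mem _ hf hg, fun x => ?_⟩
    rw [LinearMap.add_apply, map_add, hfp, hgp, LinearMap.add_apply]

/-- Relative functionals descend to relative functionals on the quotient. -/
lemma exists_bar_relFun {I : Ideal R} {ψ : P →ₗ[R] R}
    (hψ : ψ ∈ (I • ⊤ : Submodule R (P →ₗ[R] R))) :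
    ∃ ψb ∈ ((I.map (Ideal.Quotient.mk J)) • ⊤ :
      Submodule (R ⧸ J) ((P ⧸ (J • ⊤ : Submodule R P)) →ₗ[R ⧸ J] (R ⧸ J))),
      ∀ x : P, ψb ((Submodule.Quotient.mk x : P ⧸ (J • ⊤ : Submodule R P))) =
        Ideal.Quotient.mk J (ψ x) := by
  refine Submodule.smul_induction_on hψ (fun r hr f _ => ?_) (fun a b ha hb => ?_)
  · refine ⟨(Ideal.Quotient.mk J r) • barFun J f,
      Submodule.smul_mem_smul (Ideal.mem_map_of_mem _ hr) trivial, fun x => ?_⟩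
    rw [LinearMap.smul_apply, smul_eq_mul, barFun_mk, LinearMap.smul_apply, smul_eq_mul, ← map_mul]
  · obtain ⟨f, hf, hfp⟩ := ha
    obtain ⟨g, hg, hgp⟩ := hb
    refine ⟨f + g, Submodule.add_mem _ hf hg, fun x => ?_⟩
    rw [LinearMap.add_apply, hfp, hgp, LinearMap.add_apply, ← map_add]

end Quotient

end S3aux
namespace S3aux

variable {R : Type*} [CommRing R] {P : Type*} [AddCommGroup P] [Module R P]

section Red

variable (J : Ideal R)

/-- The reduction map `R × P → (R/J) × (P/JP)`. -/
def redMap : R × P → (R ⧸ J) × (P ⧸ (J • ⊤ : Submodule R P)) :=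
  fun x => (Ideal.Quotient.mk J x.1, Submodule.Quotient.mk x.2)

lemma redMap_surjective : Function.Surjective (redMap (P := P) J) := by
  rintro ⟨a, p⟩
  obtain ⟨a', rfl⟩ := Ideal.Quotient.mk_surjective a
  obtain ⟨p', rfl⟩ := Submodule.Quotient.mk_surjective _ p
  exact ⟨(a', p'), rfl⟩

/-- Descent of elements of `ET(R⊕P)` to the quotient. -/
lemma ETGroup_descend {σ : (R × P) →ₗ[R] (R × P)} (hσ : σ ∈ ETGroup R P) :
    ∃ σb ∈ ETGroup (R ⧸ J) (P ⧸ (J • ⊤ : Submodule R P)),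
      ∀ x : R × P, redMap J (σ x) = σb (redMap J x) := by
  induction hσ using Submonoid.closure_induction with
  | mem f hf =>
    rcases hf with ⟨q, hf⟩ | ⟨ψ, hf⟩
    · refine ⟨Tmap (Submodule.Quotient.mk q), Tmap_mem_ET _, fun x => ?_⟩
      rw [hf x]
      show (_, (Submodule.Quotient.mk (x.2 + x.1 • q) : P ⧸ (J • ⊤ : Submodule R P))) = _
      rw [Submodule.Quotient.mk_add, ← qsmul]
      rfl
    · refine ⟨Smap (barFun J ψ), Smap_mem_ET _, fun x => ?_⟩
      rw [hf x]
      show ((Ideal.Quotient.mk J (x.1 + ψ x.2) : R ⧸ J), _) = _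
      rw [map_add]
      rfl
  | one => exact ⟨1, one_mem _, fun x => rfl⟩
  | mul f g hf hg ihf ihg =>
    obtain ⟨fb, hfb, hfp⟩ := ihf
    obtain ⟨gb, hgb, hgp⟩ := ihg
    refine ⟨fb * gb, mul_mem hfb hgb, fun x => ?_⟩
    rw [Module.End.mul_apply, Module.End.mul_apply, hfp, hgp]

/-- Descent of elements of the inner relative group to the quotient. -/
lemma inner_descend {I : Ideal R} {σ : (R × P) →ₗ[R] (R × P)}
    (hσ : σ ∈ Submonoid.closure (relSet R P I)) :
    ∃ σb ∈ Submonoid.closure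
      (relSet (R ⧸ J) (P ⧸ (J • ⊤ : Submodule R P)) (I.map (Ideal.Quotient.mk J))),
      ∀ x : R × P, redMap J (σ x) = σb (redMap J x) := by
  induction hσ using Submonoid.closure_induction with
  | mem f hf =>
    rcases hf with ⟨q, hq, hf⟩ | ⟨ψ, hψ, hf⟩
    · refine ⟨Tmap (Submodule.Quotient.mk q), Tmap_mem_inner (mem_smul_top_quot J hq),
        fun x => ?_⟩
      rw [hf x]
      show (_, (Submodule.Quotient.mk (x.2 + x.1 • q) : P ⧸ (J • ⊤ : Submodule R P))) = _
      rw [Submodule.Quotient.mk_add, ← qsmul]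
      rfl
    · obtain ⟨ψb, hψb, hψp⟩ := exists_bar_relFun J hψ
      refine ⟨Smap ψb, Smap_mem_inner hψb, fun x => ?_⟩
      rw [hf x]
      show ((Ideal.Quotient.mk J (x.1 + ψ x.2) : R ⧸ J), _) = _
      rw [map_add, ← hψp]
      rfl
  | one => exact ⟨1, one_mem _, fun x => rfl⟩
  | mul f g hf hg ihf ihg =>
    obtain ⟨fb, hfb, hfp⟩ := ihf
    obtain ⟨gb, hgb, hgp⟩ := ihg
    refine ⟨fb * gb, mul_mem hfb hgb, fun x => ?_⟩
    rw [Module.End.mul_apply, Module.End.mul_apply, hfp, hgp]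

/-- Descent of elements of `ET(R⊕P, I)` to the quotient. -/
lemma rel_descend {I : Ideal R} {τ : (R × P) →ₗ[R] (R × P)} (hτ : τ ∈ ETGroupRel R P I) :
    ∃ τb ∈ ETGroupRel (R ⧸ J) (P ⧸ (J • ⊤ : Submodule R P)) (I.map (Ideal.Quotient.mk J)),
      ∀ x : R × P, redMap J (τ x) = τb (redMap J x) := by
  rw [ETGroupRel_def] at hτ
  induction hτ using Submonoid.closure_induction with
  | mem f hf =>
    obtain ⟨g, h, e, hg, hh, hgh, hhg, he, rfl⟩ := hf
    obtain ⟨gb, hgb, hgp⟩ := ETGroup_descend J hg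
    obtain ⟨hb, hhb, hhp⟩ := ETGroup_descend J hh
    obtain ⟨eb, heb, hep⟩ := inner_descend J he
    have hghb : gb * hb = 1 := by
      apply LinearMap.ext
      intro y
      obtain ⟨x, rfl⟩ := redMap_surjective J y
      rw [Module.End.mul_apply, ← hhp, ← hgp]
      have := congrArg (fun u => u x) hgh
      simp only [Module.End.mul_apply] at this
      rw [this]
      simp only [Module.End.one_apply]
    have hhgb : hb * gb = 1 := by
      apply LinearMap.ext
      intro y
      obtain ⟨x, rfl⟩ := redMap_surjective J y
      rw [Module.End.mul_apply, ← hgp, ← hhp]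
      have := congrArg (fun u => u x) hhg
      simp only [Module.End.mul_apply] at this
      rw [this]
      simp only [Module.End.one_apply]
    refine ⟨gb * eb * hb, conj_mem_rel hgb hhb hghb hhgb heb, fun x => ?_⟩
    simp only [Module.End.mul_apply]
    rw [hgp, hep, hhp]
  | one => exact ⟨1, one_mem _, fun x => rfl⟩
  | mul f g hf hg ihf ihg =>
    obtain ⟨fb, hfb, hfp⟩ := ihf
    obtain ⟨gb, hgb, hgp⟩ := ihg
    refine ⟨fb * gb, mul_mem hfb hgb, fun x => ?_⟩
    rw [Module.End.mul_apply, Module.End.mul_apply, hfp, hgp]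

/-- Lifting of elements of `ET` over the quotient, with inverses. -/
lemma ETGroup_lift [Module.Projective R P] {σb : ((R ⧸ J) × (P ⧸ (J • ⊤ : Submodule R P))) →ₗ[R ⧸ J]
    ((R ⧸ J) × (P ⧸ (J • ⊤ : Submodule R P)))} (hσb : σb ∈ ETGroup (R ⧸ J) (P ⧸ (J • ⊤ : Submodule R P))) :
    ∃ σ σ' : (R × P) →ₗ[R] (R × P), σ ∈ ETGroup R P ∧ σ' ∈ ETGroup R P ∧
      σ * σ' = 1 ∧ σ' * σ = 1 ∧ ∀ x : R × P, redMap J (σ x) = σb (redMap J x) := by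
  induction hσb using Submonoid.closure_induction with
  | mem f hf =>
    rcases hf with ⟨qb, hf⟩ | ⟨ψb, hf⟩
    · obtain ⟨q, rfl⟩ := Submodule.Quotient.mk_surjective _ qb
      refine ⟨Tmap q, Tmap (-q), Tmap_mem_ET _, Tmap_mem_ET _, (Tmap_inv q).1, (Tmap_inv q).2,
        fun x => ?_⟩
      rw [Tmap_apply, hf (redMap J x)]
      show (_, (Submodule.Quotient.mk (x.2 + x.1 • q) : P ⧸ (J • ⊤ : Submodule R P))) = _
      rw [Submodule.Quotient.mk_add, ← qsmul]
      rfl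
    · obtain ⟨ψ, hψ⟩ := exists_lift_fun J ψb
      refine ⟨Smap ψ, Smap (-ψ), Smap_mem_ET _, Smap_mem_ET _, (Smap_inv ψ).1, (Smap_inv ψ).2,
        fun x => ?_⟩
      rw [Smap_apply, hf (redMap J x)]
      show ((Ideal.Quotient.mk J (x.1 + ψ x.2) : R ⧸ J), _) = _
      rw [map_add, hψ]
      rfl
  | one => exact ⟨1, 1, one_mem _, one_mem _, one_mul 1, one_mul 1, fun x => rfl⟩
  | mul f g hf hg ihf ihg =>
    obtain ⟨s1, s1', hs1, hs1', hinv1, hinv1', hp1⟩ := ihf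
    obtain ⟨s2, s2', hs2, hs2', hinv2, hinv2', hp2⟩ := ihg
    refine ⟨s1 * s2, s2' * s1', mul_mem hs1 hs2, mul_mem hs2' hs1', ?_, ?_, fun x => ?_⟩
    · rw [mul_assoc, ← mul_assoc s2, hinv2, one_mul, hinv1]
    · rw [mul_assoc, ← mul_assoc s1', hinv1', one_mul, hinv2']
    · rw [Module.End.mul_apply, Module.End.mul_apply, hp1, hp2]

/-- Lifting of elements of the inner relative group over the quotient. -/
lemma inner_lift [Module.Projective R P] {I : Ideal R}
    {σb : ((R ⧸ J) × (P ⧸ (J • ⊤ : Submodule R P))) →ₗ[R ⧸ J]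
      ((R ⧸ J) × (P ⧸ (J • ⊤ : Submodule R P)))}
    (hσb : σb ∈ Submonoid.closure
      (relSet (R ⧸ J) (P ⧸ (J • ⊤ : Submodule R P)) (I.map (Ideal.Quotient.mk J)))) :
    ∃ σ ∈ Submonoid.closure (relSet R P I), ∀ x : R × P, redMap J (σ x) = σb (redMap J x) := by
  induction hσb using Submonoid.closure_induction with
  | mem f hf =>
    rcases hf with ⟨qb, hqb, hf⟩ | ⟨ψb, hψb, hf⟩
    · obtain ⟨q, hq, rfl⟩ := exists_lift_smul_top J hqb
      refine ⟨Tmap q, Tmap_mem_inner hq, fun x => ?_⟩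
      rw [Tmap_apply, hf (redMap J x)]
      show (_, (Submodule.Quotient.mk (x.2 + x.1 • q) : P ⧸ (J • ⊤ : Submodule R P))) = _
      rw [Submodule.Quotient.mk_add, ← qsmul]
      rfl
    · obtain ⟨ψ, hψ, hψp⟩ := exists_lift_relFun J hψb
      refine ⟨Smap ψ, Smap_mem_inner hψ, fun x => ?_⟩
      rw [Smap_apply, hf (redMap J x)]
      show ((Ideal.Quotient.mk J (x.1 + ψ x.2) : R ⧸ J), _) = _
      rw [map_add, hψp]
      rfl
  | one => exact ⟨1, one_mem _, fun x => rfl⟩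
  | mul f g hf hg ihf ihg =>
    obtain ⟨s1, hs1, hp1⟩ := ihf
    obtain ⟨s2, hs2, hp2⟩ := ihg
    refine ⟨s1 * s2, mul_mem hs1 hs2, fun x => ?_⟩
    rw [Module.End.mul_apply, Module.End.mul_apply, hp1, hp2]

/-- Lifting of elements of `ET(R̄⊕P̄, Ī)` to `ET(R⊕P, I)`. -/
lemma rel_lift [Module.Projective R P] {I : Ideal R}
    {τb : ((R ⧸ J) × (P ⧸ (J • ⊤ : Submodule R P))) →ₗ[R ⧸ J]
      ((R ⧸ J) × (P ⧸ (J • ⊤ : Submodule R P)))}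
    (hτb : τb ∈ ETGroupRel (R ⧸ J) (P ⧸ (J • ⊤ : Submodule R P)) (I.map (Ideal.Quotient.mk J))) :
    ∃ τ ∈ ETGroupRel R P I, ∀ x : R × P, redMap J (τ x) = τb (redMap J x) := by
  rw [ETGroupRel_def] at hτb
  induction hτb using Submonoid.closure_induction with
  | mem f hf =>
    obtain ⟨gb, hb, eb, hgb, hhb, hghb, hhgb, heb, rfl⟩ := hf
    obtain ⟨g, g', hg, hg', hinv, hinv', hgp⟩ := ETGroup_lift J hgb
    obtain ⟨e, he, hep⟩ := inner_lift J heb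
    refine ⟨g * e * g', conj_mem_rel hg hg' hinv hinv' he, fun x => ?_⟩
    have hg'p : ∀ x : R × P, redMap J (g' x) = hb (redMap J x) := by
      intro x
      have h1 : redMap J x = gb (redMap J (g' x)) := by
        rw [← hgp]
        have := congrArg (fun u => u x) hinv
        simp only [Module.End.mul_apply] at this
        rw [this, Module.End.one_apply]
      have := congrArg hb h1
      rw [← Module.End.mul_apply, hhgb, Module.End.one_apply] at this
      exact this.symm
    simp only [Module.End.mul_apply]
    rw [hgp, hep, hg'p]
  | one => exact ⟨1, one_mem _, fun x => rfl⟩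
  | mul f g hf hg ihf ihg =>
    obtain ⟨s1, hs1, hp1⟩ := ihf
    obtain ⟨s2, hs2, hp2⟩ := ihg
    refine ⟨s1 * s2, mul_mem hs1 hs2, fun x => ?_⟩
    rw [Module.End.mul_apply, Module.End.mul_apply, hp1, hp2]

end Red

end S3aux
namespace S3aux

variable {R : Type*} [CommRing R] {P : Type*} [AddCommGroup P] [Module R P]

/-- The set of values of pairings between `P` and its dual. -/
def traceSet (R : Type*) [CommRing R] (P : Type*) [AddCommGroup P] [Module R P] : Set R :=
  {t | ∃ (φ : P →ₗ[R] R) (v : P), φ v = t}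

/-- For a f.g. projective module of constant positive rank, the trace ideal is everything. -/
lemma trace_span_eq_top [Module.Finite R P] [Module.Projective R P] (r : ℕ) (hr : 2 ≤ r)
    (hrk : HasRank R P r) : Ideal.span (traceSet R P) = ⊤ := by
  by_contra hne
  obtain ⟨m, hm, hle⟩ := Ideal.exists_le_maximal _ hne
  have hP : (⊤ : Submodule R P) ≤ (Ideal.span (traceSet R P)) • ⊤ := by
    intro x _
    obtain ⟨s, hs⟩ := Module.projective_def.mp (inferInstance : Module.Projective R P)
    have hx : Finsupp.linearCombination R id (s x) = x := hs x
    rw [← hx, Finsupp.linearCombination_apply, Finsupp.sum]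
    refine Submodule.sum_mem _ fun c _ => ?_
    refine Submodule.smul_mem_smul (Ideal.subset_span ⟨(Finsupp.lapply c) ∘ₗ s, x, rfl⟩) trivial
  have hPm : (⊤ : Submodule R P) ≤ m • ⊤ := hP.trans (Submodule.smul_mono_left hle)
  obtain ⟨c, hc1, hc0⟩ :=
    Submodule.exists_sub_one_mem_and_smul_eq_zero_of_fg_of_le_smul m ⊤ Module.Finite.fg_top hPm
  have hcm : c ∉ m := by
    intro hcmem
    have h1 : (1 : R) ∈ m := by
      have := m.sub_mem hcmem hc1
      rwa [sub_sub_cancel] at this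
    exact hm.ne_top (m.eq_top_of_isUnit_mem h1 isUnit_one)
  haveI := hm.isPrime
  have hsub : Subsingleton (LocalizedModule m.primeCompl P) := by
    refine ⟨fun a b => ?_⟩
    induction a using LocalizedModule.induction_on with
    | h p s =>
      induction b using LocalizedModule.induction_on with
      | h p' s' =>
        rw [LocalizedModule.mk_eq]
        refine ⟨⟨c, hcm⟩, ?_⟩
        show c • ((s' : R) • p) = c • ((s : R) • p')
        rw [hc0 _ trivial, hc0 _ trivial]
  have hrank := hrk m hm.isPrime
  rw [rank_subsingleton'] at hrank
  have : (r : Cardinal) = 0 := hrank.symm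
  have : r = 0 := by exact_mod_cast this
  omega

end S3aux
namespace S3aux

variable {R : Type*} [CommRing R] {P : Type*} [AddCommGroup P] [Module R P]

/-- The basic "round": multiply the first coordinate of `(u, 0)` by `1 - ψ w`. -/
lemma round {I : Ideal R} {ψ : P →ₗ[R] R} (hψ : ψ ∈ (I • ⊤ : Submodule R (P →ₗ[R] R)))
    (w : P) (u : R) (hu' : IsUnit (u * (1 - ψ w))) :
    ∃ σ ∈ ETGroupRel R P I, σ (u, (0 : P)) = (u * (1 - ψ w), (0 : P)) := by
  obtain ⟨v, hv⟩ := hu'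
  set σ₁ : (R × P) →ₗ[R] (R × P) := Tmap w * Smap ψ * Tmap (-w) with hσ₁
  have hσ₁mem : σ₁ ∈ ETGroupRel R P I :=
    conj_mem_rel (Tmap_mem_ET w) (Tmap_mem_ET (-w)) (Tmap_inv w).1 (Tmap_inv w).2
      (Smap_mem_inner hψ)
  set q' : P := (ψ w * u * (↑v⁻¹ : R)) • w with hq'
  have hq'mem : q' ∈ (I • ⊤ : Submodule R P) :=
    Submodule.smul_mem_smul (I.mul_mem_right _ (I.mul_mem_right _ (pair_mem hψ w))) trivial
  refine ⟨Tmap q' * σ₁, mul_mem (mem_rel_of_inner (Tmap_mem_inner hq'mem)) hσ₁mem, ?_⟩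
  have hvv : u * (1 - ψ w) * (↑v⁻¹ : R) = 1 := by
    rw [← hv]; exact v.mul_inv
  simp only [Module.End.mul_apply, hσ₁, Tmap_apply, Smap_apply, hq']
  ext
  · show u + ψ (0 + u • (-w)) = u * (1 - ψ w)
    simp only [zero_add, map_smul, map_neg, smul_eq_mul]
    ring
  · show (0 + u • (-w)) + (u + ψ (0 + u • (-w))) • w
        + (u + ψ (0 + u • (-w))) • ((ψ w * u * (↑v⁻¹ : R)) • w) = 0
    simp only [zero_add, map_smul, map_neg, smul_eq_mul]
    match_scalars
    linear_combination (ψ w * u) * hvv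

/-- One can remove `n * t` (`t` in the trace ideal, `n ∈ I` nilpotent) from the unit
in position `(unit, 0)` using relative transvections. -/
lemma remove_trace {I : Ideal R} :
    ∀ t ∈ Ideal.span (traceSet R P), ∀ n : R, n ∈ I → IsNilpotent n →
      ∀ m : R, IsNilpotent m →
        ∃ σ ∈ ETGroupRel R P I, σ (1 + m + n * t, (0 : P)) = (1 + m, (0 : P)) := by
  intro t ht
  induction ht using Submodule.span_induction with
  | mem x hx =>
    obtain ⟨φ, v, rfl⟩ := hx
    intro n hn hnil m hm
    have hu : IsUnit (1 + (m + n * φ v)) :=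
      IsNilpotent.isUnit_one_add ((Commute.all _ _).isNilpotent_add hm
        ((Commute.all _ _).isNilpotent_mul_right hnil))
    obtain ⟨vu, hvu⟩ := hu
    set ψ : P →ₗ[R] R := (n * (↑vu⁻¹ : R)) • φ with hψdef
    have hψ : ψ ∈ (I • ⊤ : Submodule R (P →ₗ[R] R)) :=
      Submodule.smul_mem_smul (I.mul_mem_right _ hn) trivial
    set u : R := 1 + m + n * φ v with hudef
    have hvu' : (↑vu : R) = u := by rw [hvu, hudef]; ring
    have hval : u * (1 - ψ v) = 1 + m := by
      rw [hψdef]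
      simp only [LinearMap.smul_apply, smul_eq_mul]
      have hvi : (↑vu : R) * (↑vu⁻¹ : R) = 1 := vu.mul_inv
      rw [← hvu']
      linear_combination hvu - n * φ v * hvi
    have hu2 : IsUnit (u * (1 - ψ v)) := by
      rw [hval]
      exact IsNilpotent.isUnit_one_add hm
    obtain ⟨σ, hσ, hσval⟩ := round hψ v u hu2
    exact ⟨σ, hσ, by rw [hσval, hval]⟩
  | zero =>
    intro n hn hnil m hm
    exact ⟨1, one_mem _, by rw [mul_zero, add_zero]; rfl⟩
  | add x y hx hy ihx ihy =>
    intro n hn hnil m hm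
    obtain ⟨σ₁, hσ₁, hσ₁val⟩ := ihx n hn hnil (m + n * y)
      ((Commute.all _ _).isNilpotent_add hm ((Commute.all _ _).isNilpotent_mul_right hnil))
    obtain ⟨σ₂, hσ₂, hσ₂val⟩ := ihy n hn hnil m hm
    refine ⟨σ₂ * σ₁, mul_mem hσ₂ hσ₁, ?_⟩
    rw [Module.End.mul_apply,
      show (1 + m + n * (x + y) : R) = 1 + (m + n * y) + n * x by ring, hσ₁val,
      show (1 + (m + n * y) : R) = 1 + m + n * y by ring]
    exact hσ₂val
  | smul a x hx ihx =>
    intro n hn hnil m hm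
    obtain ⟨σ, hσ, hσval⟩ := ihx (n * a) (I.mul_mem_right _ hn)
      ((Commute.all _ _).isNilpotent_mul_right hnil) m hm
    refine ⟨σ, hσ, ?_⟩
    rw [show (1 + m + n * (a • x) : R) = 1 + m + (n * a) * x by rw [smul_eq_mul]; ring]
    exact hσval

/-- Endgame: a unimodular-position element `(a, p)` congruent to `(1,0)` mod `I` with
`a - 1` nilpotent can be moved to `(1,0)`. -/
lemma endgame [Module.Finite R P] [Module.Projective R P] (r : ℕ) (hr : 2 ≤ r)
    (hrk : HasRank R P r) {I : Ideal R} {a : R} {p : P} (ha : a - 1 ∈ I)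
    (han : IsNilpotent (a - 1)) (hp : p ∈ (I • ⊤ : Submodule R P)) :
    ∃ σ ∈ ETGroupRel R P I, σ (a, p) = ((1 : R), (0 : P)) := by
  have hua : IsUnit a := by
    have := IsNilpotent.isUnit_one_add han
    rwa [add_comm, sub_add_cancel] at this
  obtain ⟨va, hva⟩ := hua
  set q : P := -((↑va⁻¹ : R) • p) with hq
  have hqmem : q ∈ (I • ⊤ : Submodule R P) :=
    Submodule.neg_mem _ (Submodule.smul_mem _ _ hp)
  have step1 : Tmap q (a, p) = (a, (0 : P)) := by
    rw [Tmap_apply]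
    ext
    · rfl
    · show p + a • q = 0
      rw [hq, smul_neg, smul_smul, ← hva, Units.mul_inv, one_smul, add_neg_cancel]
  obtain ⟨σ₂, hσ₂, hσ₂val⟩ := remove_trace 1
    (by rw [trace_span_eq_top r hr hrk]; trivial) (a - 1) ha han 0 (by simp)
  have ea : (1 + 0 + (a - 1) * 1 : R) = a := by ring
  have e1 : (1 + 0 : R) = 1 := by norm_num
  rw [ea, e1] at hσ₂val
  refine ⟨σ₂ * Tmap q, mul_mem hσ₂ (mem_rel_of_inner (Tmap_mem_inner hqmem)), ?_⟩
  rw [Module.End.mul_apply, step1, hσ₂val]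

end S3aux

/-- For a finitely generated projective module `P` of rank `r ≥ 2` and an ideal `I`,
`Um(R ⊕ P, I) = e₁ · ET(R ⊕ P, I)` holds iff it holds modulo the nilradical. -/
theorem statement3 (R : Type*) [CommRing R] (P : Type*) [AddCommGroup P] [Module R P]
    [Module.Finite R P] [Module.Projective R P] (r : ℕ) (hr : 2 ≤ r) (hrk : HasRank R P r)
    (I : Ideal R) :
    UmTransitive R P I ↔
      UmTransitive (R ⧸ nilradical R) (P ⧸ ((nilradical R) • ⊤ : Submodule R P))
        (I.map (Ideal.Quotient.mk (nilradical R))) := by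
  classical
  set J := nilradical R with hJ
  constructor
  · -- forward direction
    intro h ab pb hum hab hpb
    obtain ⟨φb, hφb⟩ := hum
    obtain ⟨i, hi, hi'⟩ :=
      Ideal.mem_map_iff_of_surjective _ Ideal.Quotient.mk_surjective |>.1 hab
    obtain ⟨p, hp, hpmk⟩ := S3aux.exists_lift_smul_top J hpb
    set a : R := 1 + i with ha
    have hared : Ideal.Quotient.mk J a = ab := by rw [ha, map_add, map_one, hi']; ring
    have hred : S3aux.redMap J (a, p) = (ab, pb) := by
      show (Ideal.Quotient.mk J a, Submodule.Quotient.mk p) = (ab, pb)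
      rw [hared, hpmk]
    set χ : (R × P) →ₗ[R] (R ⧸ J) :=
      { toFun := fun x => φb (S3aux.redMap J x)
        map_add' := by
          intro x y
          have hrm : S3aux.redMap J (x + y) = S3aux.redMap J x + S3aux.redMap J y := by
            show (Ideal.Quotient.mk J (x.1 + y.1), Submodule.Quotient.mk (x.2 + y.2)) = _
            rw [map_add, Submodule.Quotient.mk_add]
            rfl
          show φb (S3aux.redMap J (x + y)) = _
          rw [hrm, map_add]
        map_smul' := by
          intro c x
          have hrm : S3aux.redMap J (c • x) = (Ideal.Quotient.mk J c) • S3aux.redMap J x := by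
            show (Ideal.Quotient.mk J (c * x.1), Submodule.Quotient.mk (c • x.2)) = _
            rw [map_mul, ← S3aux.qsmul]
            rfl
          show φb (S3aux.redMap J (c • x)) = c • φb (S3aux.redMap J x)
          rw [Algebra.smul_def c, Ideal.Quotient.algebraMap_eq, hrm, map_smul, smul_eq_mul] } with hχ
    obtain ⟨φ₀, hφ₀⟩ :=
      Module.projective_lifting_property (Algebra.linearMap R (R ⧸ J)) χ
        Ideal.Quotient.mk_surjective
    have hφ₀val : Ideal.Quotient.mk J (φ₀ (a, p)) = 1 := by
      have := congrArg (fun f => f (a, p)) hφ₀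
      simp only [LinearMap.comp_apply, Algebra.linearMap_apply, Ideal.Quotient.algebraMap_eq]
        at this
      rw [this]
      show φb (S3aux.redMap J (a, p)) = 1
      rw [hred]
      exact hφb
    have hnil1 : φ₀ (a, p) - 1 ∈ J := by
      rw [hJ]
      refine Ideal.Quotient.eq.mp ?_
      rw [map_one, ← hJ]
      exact hφ₀val
    have hunit : IsUnit (φ₀ (a, p)) := by
      have := IsNilpotent.isUnit_one_add (mem_nilradical.mp (hJ ▸ hnil1))
      rwa [add_comm, sub_add_cancel] at this
    obtain ⟨vw, hvw⟩ := hunit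
    have hφval : ((↑vw⁻¹ : R) • φ₀) (a, p) = 1 := by
      rw [LinearMap.smul_apply, smul_eq_mul, ← hvw, Units.inv_mul]
    have haI : a - 1 ∈ I := by
      rw [ha, add_sub_cancel_left]
      exact hi
    obtain ⟨τ, hτ, hτval⟩ := h a p ⟨(↑vw⁻¹ : R) • φ₀, hφval⟩ haI hp
    obtain ⟨τb, hτb, hτsq⟩ := S3aux.rel_descend J hτ
    refine ⟨τb, hτb, ?_⟩
    have hkey := hτsq (a, p)
    rw [hτval, hred] at hkey
    rw [← hkey]
    show (Ideal.Quotient.mk J 1, Submodule.Quotient.mk (0 : P)) = _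
    rw [map_one, Submodule.Quotient.mk_zero]
  · -- backward direction
    intro h a p hum ha hp
    obtain ⟨φ, hφ⟩ := hum
    set φ₂ : P →ₗ[R] R := φ ∘ₗ LinearMap.inr R R P with hφ₂
    set φb : ((R ⧸ J) × (P ⧸ (J • ⊤ : Submodule R P))) →ₗ[R ⧸ J] (R ⧸ J) :=
      (LinearMap.toSpanSingleton (R ⧸ J) (R ⧸ J)
          (Ideal.Quotient.mk J (φ (1, 0)))).comp
        (LinearMap.fst (R ⧸ J) (R ⧸ J) (P ⧸ (J • ⊤ : Submodule R P))) +
      (S3aux.barFun J φ₂).comp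
        (LinearMap.snd (R ⧸ J) (R ⧸ J) (P ⧸ (J • ⊤ : Submodule R P))) with hφbdef
    have hdecomp : a * φ (1, 0) + φ₂ p = 1 := by
      have hxy : a • ((1 : R), (0 : P)) + ((0 : R), p) = (a, p) := by ext <;> simp
      rw [hφ₂]
      show a * φ (1, 0) + φ ((0 : R), p) = 1
      rw [← smul_eq_mul, ← map_smul, ← map_add, hxy, hφ]
    have hφbval : φb ((Ideal.Quotient.mk J a : R ⧸ J),
        (Submodule.Quotient.mk p : P ⧸ (J • ⊤ : Submodule R P))) = 1 := by
      rw [hφbdef]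
      simp only [LinearMap.add_apply, LinearMap.comp_apply, LinearMap.fst_apply,
        LinearMap.snd_apply, LinearMap.toSpanSingleton_apply, S3aux.barFun_mk]
      rw [smul_eq_mul, ← map_mul, ← map_add, hdecomp, map_one]
    have hcond1 : (Ideal.Quotient.mk J a : R ⧸ J) - 1 ∈ I.map (Ideal.Quotient.mk J) := by
      rw [← map_one (Ideal.Quotient.mk J), ← map_sub]
      exact Ideal.mem_map_of_mem _ ha
    obtain ⟨τb, hτbmem, hτbval⟩ := h (Ideal.Quotient.mk J a) (Submodule.Quotient.mk p)
      ⟨φb, hφbval⟩ hcond1 (S3aux.mem_smul_top_quot J hp)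
    obtain ⟨τ, hτ, hτsq⟩ := S3aux.rel_lift J hτbmem
    have hyred : S3aux.redMap J (τ (a, p)) = (1, 0) := by
      rw [hτsq (a, p)]
      exact hτbval
    have h1 : (τ (a, p)).1 - 1 ∈ J := by
      rw [hJ]
      refine Ideal.Quotient.eq.mp ?_
      rw [map_one, ← hJ]
      exact congrArg Prod.fst hyred
    have hdiff := S3aux.rel_diff_mem hτ (a, p)
    have ht1 : (τ (a, p)).1 - 1 ∈ I := by
      have heq : (τ (a, p)).1 - 1 = ((τ (a, p)).1 - a) + (a - 1) := by ring
      rw [heq]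
      exact I.add_mem hdiff.1 ha
    have ht2 : (τ (a, p)).2 ∈ (I • ⊤ : Submodule R P) := by
      have heq : (τ (a, p)).2 = ((τ (a, p)).2 - p) + p := by abel
      rw [heq]
      exact Submodule.add_mem _ hdiff.2 hp
    obtain ⟨σ, hσ, hσval⟩ := S3aux.endgame r hr hrk ht1 (mem_nilradical.mp (hJ ▸ h1)) ht2
    refine ⟨σ * τ, mul_mem hσ hτ, ?_⟩
    rw [Module.End.mul_apply]
    exact hσval
end

section
/- Let $B \subseteq C$ be commutative rings and $x \in B$ an element such that $B_x = C_x$ (the localizations at $x$ agree). Then for every $b \in B$, the induced map $B/(1+xb)B \to C/(1+xb)C$ is an isomorphism. -/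
open scoped TensorProduct

set_option synthInstance.maxHeartbeats 1000000
set_option maxHeartbeats 2000000


/-- If `B ⊆ C` and `B_x = C_x`, then `B/(1+xb)B → C/(1+xb)C` is an isomorphism
for every `b ∈ B`. -/
theorem statement4 (C : Type*) [CommRing C] (B : Subring C) (x b : B)
    (hloc : ∀ c : C, ∃ n : ℕ, (x : C) ^ n * c ∈ B) :
    Function.Bijective
      (Ideal.quotientMap (I := Ideal.span {(1 + x * b : B)})
        (Ideal.span {((1 + x * b : B) : C)}) (SubringClass.subtype B)
        (Ideal.span_le.mpr (Set.singleton_subset_iff.mpr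
          (Ideal.mem_comap.mpr (Ideal.subset_span (Set.mem_singleton _)))))) := by
  set s : B := 1 + x * b with hs
  have step : ∀ g : B, x * g ∈ Ideal.span {s} → g ∈ Ideal.span {s} := by
    intro g hg
    have h1 : g = (-b) * (x * g) + s * g := by rw [hs]; ring
    rw [h1]
    exact Ideal.add_mem _ (Ideal.mul_mem_left _ _ hg)
      (Ideal.mul_mem_right _ _ (Ideal.mem_span_singleton_self s))
  have key : ∀ m : ℕ, ∀ g : B, x ^ m * g ∈ Ideal.span {s} → g ∈ Ideal.span {s} := by
    intro m
    induction m with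
    | zero => intro g hg; simpa using hg
    | succ k ih =>
      intro g hg
      rw [pow_succ, mul_assoc] at hg
      exact step g (ih (x * g) hg)
  constructor
  · apply Ideal.quotientMap_injective'
    intro f hf
    rw [Ideal.mem_comap, Ideal.mem_span_singleton'] at hf
    obtain ⟨c, hc⟩ := hf
    obtain ⟨n, hn⟩ := hloc c
    apply key n f
    rw [Ideal.mem_span_singleton']
    refine ⟨⟨(x : C) ^ n * c, hn⟩, ?_⟩
    apply Subtype.ext
    push_cast
    simp only [SubringClass.coe_subtype] at hc
    calc (x : C) ^ n * c * (s : C) = (x : C) ^ n * (c * (s : C)) := by ring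
      _ = (x : C) ^ n * (f : C) := by rw [hc]
  · intro y
    obtain ⟨c, rfl⟩ := Ideal.Quotient.mk_surjective y
    obtain ⟨n, hn⟩ := hloc c
    refine ⟨Ideal.Quotient.mk _ ((-b) ^ n * ⟨(x : C) ^ n * c, hn⟩), ?_⟩
    rw [Ideal.quotientMap_mk, Ideal.Quotient.mk_eq_mk_iff_sub_mem]
    have hd : ((SubringClass.subtype B) ((-b) ^ n * ⟨(x : C) ^ n * c, hn⟩) : C)
        = (1 - (s : C)) ^ n * c := by
      simp only [SubringClass.coe_subtype]
      push_cast
      have : (1 : C) - (s : C) = -(x : C) * (b : C) := by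
        rw [hs]; push_cast; ring
      rw [this]
      ring
    rw [hd]
    have hdvd : ((s : C)) ∣ ((1 - (s : C)) ^ n * c - c) := by
      have h2 : ((1 : C) - (s : C)) - 1 ∣ (1 - (s : C)) ^ n - 1 ^ n :=
        sub_dvd_pow_sub_pow _ _ n
      have h3 : ((s : C)) ∣ (1 - (s : C)) ^ n - 1 := by
        rw [show ((1:C) - (s:C)) - 1 = -(s:C) by ring, neg_dvd, one_pow] at h2
        exact h2
      have : (1 - (s : C)) ^ n * c - c = ((1 - (s : C)) ^ n - 1) * c := by ring
      rw [this]
      exact h3.mul_right c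
    exact Ideal.mem_span_singleton.mpr hdvd
end

section
/- Let $B \subseteq C$ be commutative Noetherian rings of dimension at most $\delta$, let $x \in B$ be such that $B_x = C_x$, and let $\mathfrak{A}$ be an ideal of $C$ of height at least $\delta$ with $\mathfrak{A} + xC = C$. Then there exists $b \in B$ such that $1 + xb \in \mathfrak{A}$. -/
open scoped TensorProduct

set_option synthInstance.maxHeartbeats 1000000
set_option maxHeartbeats 2000000

lemma aux_colon {C : Type*} [CommRing C] (𝔄 : Ideal C) (x : C)
    (hcomax : 𝔄 ⊔ Ideal.span {x} = ⊤) :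
    ∀ (s : C) (k : ℕ), x ^ k * s ∈ 𝔄 → s ∈ 𝔄 := by
  have h1 : (1 : C) ∈ 𝔄 ⊔ Ideal.span {x} := hcomax ▸ Submodule.mem_top
  obtain ⟨a, ha𝔄, y, hy, hay⟩ := Submodule.mem_sup.mp h1
  obtain ⟨c, rfl⟩ := Ideal.mem_span_singleton'.mp hy
  intro s k hks
  have hgeom : (1 : C) - (c * x) ^ k = a * ∑ i ∈ Finset.range k, (c * x) ^ i := by
    linear_combination geom_sum_mul (c * x) k - (∑ i ∈ Finset.range k, (c * x) ^ i) * hay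
  have hs : s = s * ((1 : C) - (c * x) ^ k) + c ^ k * (x ^ k * s) := by ring
  rw [hs, hgeom]
  exact Ideal.add_mem _ (Ideal.mul_mem_left _ _ (Ideal.mul_mem_right _ _ ha𝔄))
    (Ideal.mul_mem_left _ _ hks)

lemma aux_q {C : Type*} [CommRing C] (B : Subring C) (x : B)
    (hloc : ∀ c : C, ∃ n : ℕ, (x : C) ^ n * c ∈ B)
    (p : Ideal B) (hp : p.IsPrime) (hxp : x ∉ p) :
    ∃ q : Ideal C, q.IsPrime ∧ ((x : C) ∉ q) ∧ q.comap B.subtype = p ∧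
      (∀ c : C, c ∈ q ↔ ∃ (k : ℕ) (b : B), b ∈ p ∧ (b : C) = (x : C) ^ k * c) := by
  have hxpow : ∀ k : ℕ, ∀ b : B, x ^ k * b ∈ p → b ∈ p := by
    intro k
    induction k with
    | zero => intro b hb; simpa using hb
    | succ n ih =>
      intro b hb
      rw [pow_succ', mul_assoc] at hb
      rcases hp.mem_or_mem hb with h | h
      · exact absurd h hxp
      · exact ih _ h
  refine ⟨{ carrier := {c : C | ∃ (k : ℕ) (b : B), b ∈ p ∧ (b : C) = (x : C) ^ k * c}
            zero_mem' := ⟨0, 0, p.zero_mem, by simp⟩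
            add_mem' := ?_
            smul_mem' := ?_ }, ?_, ?_, ?_, fun c => Iff.rfl⟩
  · rintro c₁ c₂ ⟨k₁, b₁, hb₁, he₁⟩ ⟨k₂, b₂, hb₂, he₂⟩
    refine ⟨k₁ + k₂, x ^ k₂ * b₁ + x ^ k₁ * b₂,
      p.add_mem (p.mul_mem_left _ hb₁) (p.mul_mem_left _ hb₂), ?_⟩
    push_cast
    rw [he₁, he₂]; ring
  · rintro c' c ⟨k, b, hb, he⟩
    obtain ⟨m, hm⟩ := hloc c'
    refine ⟨m + k, ⟨(x : C) ^ m * c', hm⟩ * b, p.mul_mem_left _ hb, ?_⟩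
    push_cast
    rw [he]; simp only [smul_eq_mul]; ring
  · constructor
    · intro htop
      have h1 : (1 : C) ∈ (⊤ : Ideal C) := Submodule.mem_top
      rw [← htop] at h1
      obtain ⟨k, b, hb, he⟩ := h1
      have hbx : b = x ^ k := Subtype.ext (by push_cast; simpa using he)
      exact hxp (hp.mem_of_pow_mem k (hbx ▸ hb))
    · rintro c₁ c₂ ⟨k, b, hb, he⟩
      obtain ⟨m₁, hm₁⟩ := hloc c₁
      obtain ⟨m₂, hm₂⟩ := hloc c₂
      set u : B := ⟨(x : C) ^ m₁ * c₁, hm₁⟩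
      set v : B := ⟨(x : C) ^ m₂ * c₂, hm₂⟩
      have hkey : u * v * x ^ k = x ^ (m₁ + m₂) * b := by
        apply Subtype.ext; push_cast
        rw [he]; ring
      have huv : u * v * x ^ k ∈ p := hkey ▸ p.mul_mem_left _ hb
      rcases hp.mem_or_mem huv with h | h
      · rcases hp.mem_or_mem h with h' | h'
        · exact Or.inl ⟨m₁, u, h', rfl⟩
        · exact Or.inr ⟨m₂, v, h', rfl⟩
      · exact absurd (hp.mem_of_pow_mem k h) hxp
  · rintro ⟨k, b, hb, he⟩
    have hbx : b = x ^ (k + 1) := Subtype.ext (by push_cast; simpa [pow_succ] using he)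
    exact hxp (hp.mem_of_pow_mem (k + 1) (hbx ▸ hb))
  · ext b
    simp only [Ideal.mem_comap]
    constructor
    · rintro ⟨k, b', hb', he⟩
      have hb'' : b' = x ^ k * b := Subtype.ext (by push_cast; exact he)
      exact hxpow k b (hb'' ▸ hb')
    · intro hb
      exact ⟨0, b, hb, by simp⟩

lemma aux_series {R : Type*} [CommRing R] [Nontrivial R] {δ : ℕ}
    (h : (δ : WithBot ℕ∞) ≤ ringKrullDim R) :
    ∃ r : LTSeries (PrimeSpectrum R), δ ≤ r.length := by
  by_contra hc
  push_neg at hc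
  cases δ with
  | zero =>
    exact absurd (hc (RelSeries.singleton _ (Nonempty.some inferInstance))) (by simp)
  | succ m =>
    have hub : ringKrullDim R ≤ (m : WithBot ℕ∞) := by
      refine iSup_le fun r => ?_
      have : r.length ≤ m := by have := hc r; omega
      exact_mod_cast this
    have := h.trans hub
    norm_cast at this
    simp [Nat.succ_le_iff] at this

/-- If `B ⊆ C` are Noetherian of dimension at most `δ`, `B_x = C_x`, and `𝔄` is an
ideal of `C` of height at least `δ` comaximal with `x`, then `1 + xb ∈ 𝔄` for some `b ∈ B`. -/
theorem statement5 (C : Type*) [CommRing C] [IsNoetherianRing C] (B : Subring C)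
    [IsNoetherianRing B] (δ : ℕ)
    (hdimB : ringKrullDim B ≤ δ) (hdimC : ringKrullDim C ≤ δ) (x : B)
    (hloc : ∀ c : C, ∃ n : ℕ, (x : C) ^ n * c ∈ B)
    (𝔄 : Ideal C)
    (hht : ∀ (p : Ideal C) (hp : p.IsPrime), 𝔄 ≤ p →
      letI := hp
      (δ : WithBot ℕ∞) ≤ ringKrullDim (Localization.AtPrime p))
    (hcomax : 𝔄 ⊔ Ideal.span {(x : C)} = ⊤) :
    ∃ b : B, (1 : C) + (x : C) * (b : C) ∈ 𝔄 := by
  classical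
  have key := aux_colon 𝔄 (x : C) hcomax
  set 𝔞 : Ideal B := 𝔄.comap B.subtype with h𝔞
  have hmain : 𝔞 ⊔ Ideal.span {x} = ⊤ := by
    by_contra hne
    obtain ⟨𝔪, h𝔪max, h𝔪⟩ := Ideal.exists_le_maximal _ hne
    haveI h𝔪prime : 𝔪.IsPrime := h𝔪max.isPrime
    have h𝔞𝔪 : 𝔞 ≤ 𝔪 := le_trans le_sup_left h𝔪
    have hx𝔪 : x ∈ 𝔪 :=
      h𝔪 (Ideal.mem_sup_right (Ideal.mem_span_singleton_self x))
    -- multiplicative set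
    let M : Submonoid B :=
      { carrier := {y : B | ∃ s ∉ 𝔪, ∃ k : ℕ, y = s * x ^ k}
        one_mem' := ⟨1, fun h => h𝔪max.ne_top ((Ideal.eq_top_iff_one 𝔪).mpr h), 0, by simp⟩
        mul_mem' := by
          rintro y z ⟨s, hs, k, rfl⟩ ⟨t, ht, l, rfl⟩
          exact ⟨s * t, fun h => ((h𝔪prime.mem_or_mem h).elim hs ht), k + l, by ring⟩ }
    have hdisj : Disjoint (𝔞 : Set B) (M : Set B) := by
      rw [Set.disjoint_left]
      rintro y hy ⟨s, hs, k, rfl⟩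
      apply hs
      apply h𝔞𝔪
      show (s : C) ∈ 𝔄
      apply key _ k
      have hmem : ((s * x ^ k : B) : C) ∈ 𝔄 := hy
      push_cast at hmem
      convert hmem using 1
      ring
    obtain ⟨p, hpPrime, h𝔞p, hpM⟩ := Ideal.exists_le_prime_disjoint 𝔞 M hdisj
    have hxp : x ∉ p := fun h =>
      (Set.disjoint_left.mp hpM h)
        ⟨1, fun h1 => h𝔪max.ne_top ((Ideal.eq_top_iff_one 𝔪).mpr h1), 1, by ring⟩
    have hp𝔪 : p ≤ 𝔪 := by
      intro y hyp
      by_contra hy𝔪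
      exact (Set.disjoint_left.mp hpM hyp) ⟨y, hy𝔪, 0, by simp⟩
    have hplt : p < 𝔪 := lt_of_le_of_ne hp𝔪 (fun h => hxp (h ▸ hx𝔪))
    obtain ⟨q, hqPrime, hxq, hqp, hqmem⟩ := aux_q B x hloc p hpPrime hxp
    haveI := hqPrime
    have h𝔄q : 𝔄 ≤ q := by
      intro a ha
      obtain ⟨m, hm⟩ := hloc a
      exact (hqmem a).mpr ⟨m, ⟨_, hm⟩, h𝔞p (show (x : C) ^ m * a ∈ 𝔄 from
        Ideal.mul_mem_left _ _ ha), rfl⟩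
    have hdim := hht q hqPrime h𝔄q
    obtain ⟨r, hr⟩ := aux_series hdim
    let f : PrimeSpectrum (Localization.AtPrime q) → PrimeSpectrum C :=
      PrimeSpectrum.comap (algebraMap C (Localization.AtPrime q))
    have hfinj : Function.Injective f :=
      PrimeSpectrum.localization_comap_injective _ q.primeCompl
    have hfmono : Monotone f := fun P₁ P₂ h => Ideal.comap_mono h
    have hfsm : StrictMono f := hfmono.strictMono_of_injective hfinj
    let r' := r.map f hfsm
    have hsub : ∀ P : PrimeSpectrum (Localization.AtPrime q), (f P).asIdeal ≤ q := by
      intro P c hc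
      by_contra hcq
      have hunit : IsUnit (algebraMap C (Localization.AtPrime q) c) :=
        IsLocalization.map_units _ (⟨c, hcq⟩ : q.primeCompl)
      exact P.isPrime.ne_top (Ideal.eq_top_of_isUnit_mem _ hc hunit)
    have hxnot : ∀ i, (x : C) ∉ (r' i).asIdeal := fun i h => hxq (hsub (r i) h)
    let g : PrimeSpectrum C → PrimeSpectrum B :=
      fun Q => ⟨Q.asIdeal.comap B.subtype, Ideal.comap_isPrime _ _⟩
    have hcontract : ∀ (Q₁ Q₂ : PrimeSpectrum C), Q₁ < Q₂ → Q₂.asIdeal ≤ q → g Q₁ < g Q₂ := by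
      intro Q₁ Q₂ hlt hle
      have hxQ₂ : (x : C) ∉ Q₂.asIdeal := fun h => hxq (hle h)
      have hxQ₁ : (x : C) ∉ Q₁.asIdeal := fun h => hxQ₂ (hlt.le h)
      have hIlt : Q₁.asIdeal < Q₂.asIdeal :=
        lt_of_le_of_ne hlt.le (fun e => hlt.ne (PrimeSpectrum.ext e))
      obtain ⟨c, hc₂, hc₁⟩ := SetLike.exists_of_lt hIlt
      obtain ⟨m, hm⟩ := hloc c
      refine lt_of_le_of_ne (Ideal.comap_mono hlt.le) ?_
      intro heq
      have hmem₂ : (⟨(x : C) ^ m * c, hm⟩ : B) ∈ Q₂.asIdeal.comap B.subtype :=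
        show (x : C) ^ m * c ∈ Q₂.asIdeal from Q₂.asIdeal.mul_mem_left _ hc₂
      have heq' : Ideal.comap B.subtype Q₁.asIdeal = Ideal.comap B.subtype Q₂.asIdeal :=
        congrArg PrimeSpectrum.asIdeal heq
      rw [← heq'] at hmem₂
      have hmem₁ : (x : C) ^ m * c ∈ Q₁.asIdeal := hmem₂
      rcases Q₁.isPrime.mem_or_mem hmem₁ with h' | h'
      · exact hxQ₁ (Q₁.isPrime.mem_of_pow_mem m h')
      · exact hc₁ h'
    let s : LTSeries (PrimeSpectrum B) :=
      { length := r'.length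
        toFun := fun i => g (r' i)
        step := fun i => hcontract _ _ (r'.step i) (hsub (r i.succ)) }
    have hlastlt : s.last < (⟨𝔪, h𝔪prime⟩ : PrimeSpectrum B) := by
      have h1 : (r' (Fin.last _)).asIdeal.comap B.subtype ≤ p := by
        rw [← hqp]
        exact Ideal.comap_mono (hsub (r (Fin.last _)))
      show (r' (Fin.last _)).asIdeal.comap B.subtype < 𝔪
      exact lt_of_le_of_lt h1 hplt
    let sfin := s.snoc ⟨𝔪, h𝔪prime⟩ hlastlt
    have hlen : (sfin.length : WithBot ℕ∞) ≤ ringKrullDim B :=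
      Order.LTSeries.length_le_krullDim sfin
    have hfin : ((δ + 1 : ℕ) : WithBot ℕ∞) ≤ ringKrullDim B := by
      refine le_trans ?_ hlen
      have : δ + 1 ≤ sfin.length := by
        show δ + 1 ≤ s.length + 1
        exact Nat.succ_le_succ hr
      exact_mod_cast this
    have hcontr := hfin.trans hdimB
    norm_cast at hcontr
    omega
  have h1 : (1 : B) ∈ 𝔞 ⊔ Ideal.span {x} := hmain ▸ Submodule.mem_top
  obtain ⟨a, ha, y, hy, hay⟩ := Submodule.mem_sup.mp h1
  obtain ⟨b, rfl⟩ := Ideal.mem_span_singleton'.mp hy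
  refine ⟨-b, ?_⟩
  have haC : (a : C) ∈ 𝔄 := ha
  have hC : (a : C) + (b : C) * (x : C) = 1 := by exact_mod_cast congrArg (fun z : B => (z : C)) hay
  have hE : (1 : C) + (x : C) * ((-b : B) : C) = (a : C) := by push_cast; linear_combination -hC
  rw [hE]
  exact haC
end

section
/- Let $R$ be a commutative ring, $I$ an ideal of $R$ such that the quotient map $f : R \to R/I$ admits a ring-theoretic section $g : R/I \to R$ (i.e. $f \circ g = \mathrm{id}$). Then the relative isotopy group satisfies $H_n(R, I) = H_n(R) \cap SL_n(R, I)$ for $n \geq 2$. -/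
open scoped TensorProduct

set_option synthInstance.maxHeartbeats 1000000
set_option maxHeartbeats 2000000


/-- `M ∈ H_n(R)` : `M` is an invertible matrix isotopic to the identity. -/
def IsIsotopicToId (R : Type*) [CommRing R] {n : ℕ} (M : Matrix (Fin n) (Fin n) R) : Prop :=
  IsUnit M ∧ ∃ α : Matrix (Fin n) (Fin n) (Polynomial R), IsUnit α ∧
    α.map (Polynomial.eval 0) = 1 ∧ α.map (Polynomial.eval 1) = M

/-- `M ∈ H_n(R, I)` : the relative isotopy condition, where the isotopy is congruent to the
identity modulo `I·x·R[x]` (polynomials with zero constant term and all coefficients in `I`). -/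
def IsIsotopicToIdRel (R : Type*) [CommRing R] {n : ℕ} (I : Ideal R)
    (M : Matrix (Fin n) (Fin n) R) : Prop :=
  IsUnit M ∧ (∀ i j, M i j - (1 : Matrix (Fin n) (Fin n) R) i j ∈ I) ∧
  ∃ α : Matrix (Fin n) (Fin n) (Polynomial R), IsUnit α ∧
    (∀ i j, (α i j - (1 : Matrix (Fin n) (Fin n) (Polynomial R)) i j).coeff 0 = 0 ∧
            ∀ m : ℕ, (α i j - (1 : Matrix (Fin n) (Fin n) (Polynomial R)) i j).coeff m ∈ I) ∧
    α.map (Polynomial.eval 1) = M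

/-- A unit polynomial over a reduced ring is a constant. -/
lemma unit_poly_eq_C {R : Type*} [CommRing R] [IsReduced R] {p : Polynomial R}
    (hp : IsUnit p) : p = Polynomial.C (p.coeff 0) := by
  obtain ⟨-, h⟩ := Polynomial.isUnit_iff_coeff_isUnit_isNilpotent.mp hp
  ext m
  rcases Nat.eq_zero_or_pos m with rfl | hm
  · simp
  · rw [Polynomial.coeff_C, if_neg hm.ne']
    exact (h m hm.ne').eq_zero

/-- If `R → R/I` admits a ring section, then for `n ≥ 2` the relative isotopy
group satisfies `H_n(R, I) = H_n(R) ∩ SL_n(R, I)` (with `R` reduced so that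
`H_n(R, I) ⊆ SL_n(R, I)`). -/
theorem statement13 (R : Type*) [CommRing R] [IsReduced R] (I : Ideal R)
    (g : R ⧸ I →+* R) (hg : (Ideal.Quotient.mk I).comp g = RingHom.id (R ⧸ I))
    (n : ℕ) (hn : 2 ≤ n) (M : Matrix (Fin n) (Fin n) R) :
    IsIsotopicToIdRel R I M ↔
      (IsIsotopicToId R M ∧ M.det = 1 ∧
        ∀ i j, M i j - (1 : Matrix (Fin n) (Fin n) R) i j ∈ I) := by
  constructor
  · rintro ⟨hM, hcong, α, hα, hco, h1⟩
    have h0 : α.map (Polynomial.eval 0) = 1 := by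
      ext i j
      have h' : (α i j).eval 0 = ((1 : Matrix (Fin n) (Fin n) (Polynomial R)) i j).eval 0 := by
        have := (hco i j).1
        rw [Polynomial.coeff_zero_eq_eval_zero, Polynomial.eval_sub, sub_eq_zero] at this
        exact this
      rw [Matrix.map_apply, h']
      by_cases hij : i = j <;> simp [Matrix.one_apply, hij]
    refine ⟨⟨hM, α, hα, h0, h1⟩, ?_, hcong⟩
    -- det M = 1
    have hdet : IsUnit α.det := (Matrix.isUnit_iff_isUnit_det α).mp hα
    have hC : α.det = Polynomial.C (α.det.coeff 0) := unit_poly_eq_C hdet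
    have he0 : α.det.eval 0 = 1 := by
      have hd := RingHom.map_det (Polynomial.evalRingHom (0 : R)) α
      rw [RingHom.mapMatrix_apply, Polynomial.coe_evalRingHom, h0, Matrix.det_one] at hd
      simpa using hd
    have hc1 : α.det.coeff 0 = 1 := by
      rw [hC] at he0; simpa using he0
    have : M.det = α.det.eval 1 := by
      have hd := RingHom.map_det (Polynomial.evalRingHom (1 : R)) α
      rw [RingHom.mapMatrix_apply, Polynomial.coe_evalRingHom, h1] at hd
      simpa using hd.symm
    rw [this, hC, hc1]; simp
  · rintro ⟨⟨hM, β, hβ, hβ0, hβ1⟩, hdet, hcong⟩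
    -- the retraction h : R → R
    set h : R →+* R := g.comp (Ideal.Quotient.mk I) with hh
    have hmkh : (Ideal.Quotient.mk I).comp h = Ideal.Quotient.mk I := by
      rw [hh, ← RingHom.comp_assoc, hg, RingHom.id_comp]
    -- h applied to M is the identity matrix
    have hMh : M.map h = 1 := by
      ext i j
      have : (Ideal.Quotient.mk I) (M i j) =
          (Ideal.Quotient.mk I) ((1 : Matrix (Fin n) (Fin n) R) i j) := by
        rw [← sub_eq_zero, ← map_sub, Ideal.Quotient.eq_zero_iff_mem]
        exact hcong i j
      have : h (M i j) = h ((1 : Matrix (Fin n) (Fin n) R) i j) := by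
        simp only [hh, RingHom.comp_apply, this]
      rw [Matrix.map_apply, this]
      by_cases hij : i = j <;> simp [Matrix.one_apply, hij]
    -- Φ : entrywise coefficientwise application of h
    set Φ : Matrix (Fin n) (Fin n) (Polynomial R) →+* Matrix (Fin n) (Fin n) (Polynomial R) :=
      (Polynomial.mapRingHom h).mapMatrix with hΦ
    obtain ⟨u, hu⟩ := hβ
    set v : (Matrix (Fin n) (Fin n) (Polynomial R))ˣ := Units.map Φ.toMonoidHom u with hv
    set γ : Matrix (Fin n) (Fin n) (Polynomial R) := β * ((v⁻¹ : _ˣ) : Matrix _ _ _) with hγ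
    have hγu : IsUnit γ := ⟨u * v⁻¹, by rw [Units.val_mul, hu]⟩
    have hvval : (v : Matrix (Fin n) (Fin n) (Polynomial R)) = β.map (Polynomial.map h) := by
      simp [hv, hΦ, hu]
    -- evaluation homs
    set e0 : Matrix (Fin n) (Fin n) (Polynomial R) →+* Matrix (Fin n) (Fin n) R :=
      (Polynomial.evalRingHom (0 : R)).mapMatrix with he0
    set e1 : Matrix (Fin n) (Fin n) (Polynomial R) →+* Matrix (Fin n) (Fin n) R :=
      (Polynomial.evalRingHom (1 : R)).mapMatrix with he1
    have he0v : e0 (v : Matrix (Fin n) (Fin n) (Polynomial R)) = 1 := by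
      rw [hvval]
      ext i j
      simp only [he0, RingHom.mapMatrix_apply, Matrix.map_apply, Polynomial.coe_evalRingHom,
        Polynomial.eval_zero_map]
      have : β.map (Polynomial.eval 0) i j = (1 : Matrix (Fin n) (Fin n) R) i j := by rw [hβ0]
      rw [Matrix.map_apply] at this
      rw [this]
      by_cases hij : i = j <;> simp [Matrix.one_apply, hij]
    have he1v : e1 (v : Matrix (Fin n) (Fin n) (Polynomial R)) = 1 := by
      rw [hvval]
      ext i j
      simp only [he1, RingHom.mapMatrix_apply, Matrix.map_apply, Polynomial.coe_evalRingHom,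
        Polynomial.eval_one_map]
      have : β.map (Polynomial.eval 1) i j = M i j := by rw [hβ1]
      rw [Matrix.map_apply] at this
      rw [this]
      have := congrFun (congrFun hMh i) j
      rw [Matrix.map_apply] at this
      exact this
    have he0vinv : e0 ((v⁻¹ : _ˣ) : Matrix (Fin n) (Fin n) (Polynomial R)) = 1 := by
      have h1 : Units.map e0.toMonoidHom v = 1 := Units.ext (by simpa using he0v)
      have : e0 ((v⁻¹ : _ˣ) : Matrix (Fin n) (Fin n) (Polynomial R))
          = ((Units.map e0.toMonoidHom v)⁻¹ : _ˣ) := by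
        simp [Units.coe_map_inv]
      rw [this, h1]; simp
    have he1vinv : e1 ((v⁻¹ : _ˣ) : Matrix (Fin n) (Fin n) (Polynomial R)) = 1 := by
      have h1 : Units.map e1.toMonoidHom v = 1 := Units.ext (by simpa using he1v)
      have : e1 ((v⁻¹ : _ˣ) : Matrix (Fin n) (Fin n) (Polynomial R))
          = ((Units.map e1.toMonoidHom v)⁻¹ : _ˣ) := by
        simp [Units.coe_map_inv]
      rw [this, h1]; simp
    have hγ0 : γ.map (Polynomial.eval 0) = 1 := by
      have : e0 γ = 1 := by
        rw [hγ, map_mul, he0vinv, mul_one]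
        ext i j
        simp only [he0, RingHom.mapMatrix_apply, Matrix.map_apply, Polynomial.coe_evalRingHom]
        have : β.map (Polynomial.eval 0) i j = (1 : Matrix (Fin n) (Fin n) R) i j := by rw [hβ0]
        rw [Matrix.map_apply] at this
        exact this
      simpa [he0, RingHom.mapMatrix_apply] using this
    have hγ1 : γ.map (Polynomial.eval 1) = M := by
      have : e1 γ = M := by
        rw [hγ, map_mul, he1vinv, mul_one]
        ext i j
        simp only [he1, RingHom.mapMatrix_apply, Matrix.map_apply, Polynomial.coe_evalRingHom]
        have : β.map (Polynomial.eval 1) i j = M i j := by rw [hβ1]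
        rw [Matrix.map_apply] at this
        exact this
      simpa [he1, RingHom.mapMatrix_apply] using this
    -- reduction mod I
    set Q : Matrix (Fin n) (Fin n) (Polynomial R) →+*
        Matrix (Fin n) (Fin n) (Polynomial (R ⧸ I)) :=
      (Polynomial.mapRingHom (Ideal.Quotient.mk I)).mapMatrix with hQ
    have hQv : Q (v : Matrix (Fin n) (Fin n) (Polynomial R)) = Q β := by
      rw [hvval]
      ext i j
      simp only [hQ, RingHom.mapMatrix_apply, Matrix.map_apply, Polynomial.coe_mapRingHom,
        Polynomial.map_map, hmkh]
    have hQγ : Q γ = 1 := by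
      have huv : Units.map Q.toMonoidHom u = Units.map Q.toMonoidHom v := by
        apply Units.ext
        rw [Units.coe_map, Units.coe_map]
        simp only [RingHom.toMonoidHom_eq_coe, MonoidHom.coe_coe]
        rw [hu, hQv]
      rw [hγ, map_mul]
      have h2 : Q ((v⁻¹ : _ˣ) : Matrix (Fin n) (Fin n) (Polynomial R))
          = ((Units.map Q.toMonoidHom v)⁻¹ : _ˣ) := by simp [Units.coe_map_inv]
      rw [h2, ← huv, ← hu]
      have : Q ((u : Matrix (Fin n) (Fin n) (Polynomial R)))
          = ((Units.map Q.toMonoidHom u : _ˣ) : Matrix _ _ _) := by simp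
      rw [this, ← Units.val_mul, mul_inv_cancel, Units.val_one]
    refine ⟨hM, hcong, γ, hγu, fun i j => ⟨?_, fun m => ?_⟩, hγ1⟩
    · rw [Polynomial.coeff_zero_eq_eval_zero, Polynomial.eval_sub, sub_eq_zero]
      have h3 : γ.map (Polynomial.eval 0) i j = (1 : Matrix (Fin n) (Fin n) R) i j := by rw [hγ0]
      rw [Matrix.map_apply] at h3
      rw [h3]
      by_cases hij : i = j <;> simp [Matrix.one_apply, hij]
    · rw [← Ideal.Quotient.eq_zero_iff_mem]
      have h4 : (γ i j).map (Ideal.Quotient.mk I)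
          = (1 : Matrix (Fin n) (Fin n) (Polynomial (R ⧸ I))) i j := by
        have := congrFun (congrFun hQγ i) j
        simpa [hQ, RingHom.mapMatrix_apply, Matrix.map_apply] using this
      have h5 : ((γ i j - (1 : Matrix (Fin n) (Fin n) (Polynomial R)) i j).map
          (Ideal.Quotient.mk I)) = 0 := by
        rw [Polynomial.map_sub, h4]
        by_cases hij : i = j <;> simp [Matrix.one_apply, hij]
      have := congrArg (fun p => Polynomial.coeff p m) h5
      simpa [Polynomial.coeff_map] using this
end

section
/- Let $R$ be a commutative ring, $I$ an ideal such that the quotient map $f : R \to R/I$ has a ring section $g$. Assume $\mathrm{Um}_n(R) = e_1 \cdot H_n(R)$ for some $n \geq 2$. If $v_1, v_2 \in \mathrm{Um}_n(R)$ satisfy $v_1 \equiv v_2 \pmod I$, then there exists $\beta \in H_n(R, I)$ with $v_1 = v_2 \beta$. -/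
open scoped TensorProduct

set_option synthInstance.maxHeartbeats 1000000
set_option maxHeartbeats 2000000


/-- The group of elementary matrices `E_n(R)`, as a submonoid of square matrices
(it is closed under inverses since the inverse of a transvection is a transvection). -/
def ElemGroup (R : Type*) [CommRing R] (n : ℕ) : Submonoid (Matrix (Fin n) (Fin n) R) :=
  Submonoid.closure {M | ∃ i j : Fin n, ∃ c : R, i ≠ j ∧ M = Matrix.transvection i j c}

/-- The relative elementary group `E_n(R, I)` : the normal closure in `E_n(R)` of the
subgroup generated by elementary matrices with off-diagonal entry in `I`. -/
def ElemGroupRel (R : Type*) [CommRing R] (n : ℕ) (I : Ideal R) :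
    Submonoid (Matrix (Fin n) (Fin n) R) :=
  Submonoid.closure {M | ∃ g h e : Matrix (Fin n) (Fin n) R,
    g ∈ ElemGroup R n ∧ h ∈ ElemGroup R n ∧ g * h = 1 ∧ h * g = 1 ∧
    e ∈ Submonoid.closure
      {M' | ∃ i j : Fin n, ∃ c : R, i ≠ j ∧ c ∈ I ∧ M' = Matrix.transvection i j c} ∧
    M = g * e * h}

/-- A row is unimodular if its entries generate the unit ideal. -/
def IsUnimodularRow (R : Type*) [CommRing R] {n : ℕ} (v : Fin n → R) : Prop :=
  ∃ w : Fin n → R, ∑ i, v i * w i = 1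

/-- The first standard basis row `e₁ = (1, 0, …, 0)`. -/
def e₁ (R : Type*) [CommRing R] (n : ℕ) : Fin n → R := fun i => if (i : ℕ) = 0 then 1 else 0

open Matrix in
/-- Auxiliary: `vecMul` commutes with entrywise application of a ring hom. -/
theorem vecMul_ringHom_map_aux {R S : Type*} [CommRing R] [CommRing S] {n : ℕ}
    (f : R →+* S) (v : Fin n → R) (A : Matrix (Fin n) (Fin n) R) :
    (fun i => f (v i)) ᵥ* (A.map f) = fun j => f ((v ᵥ* A) j) := by
  funext j
  simp [Matrix.vecMul, dotProduct, Matrix.map_apply, map_sum]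

/-- Suppose `R → R/I` has a ring section and `Um_n(R) = e₁ · H_n(R)` for some
`n ≥ 2`. If `v₁, v₂` are unimodular rows with `v₁ ≡ v₂ (mod I)`, then `v₁ = v₂ β` for some
`β ∈ H_n(R, I)`. -/
theorem statement14 (R : Type*) [CommRing R] (I : Ideal R)
    (g : R ⧸ I →+* R) (hg : (Ideal.Quotient.mk I).comp g = RingHom.id (R ⧸ I))
    (n : ℕ) (hn : 2 ≤ n)
    (hUm : ∀ v : Fin n → R, IsUnimodularRow R v →
      ∃ M : Matrix (Fin n) (Fin n) R, IsIsotopicToId R M ∧ Matrix.vecMul (e₁ R n) M = v)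
    (v₁ v₂ : Fin n → R) (hv₁ : IsUnimodularRow R v₁) (hv₂ : IsUnimodularRow R v₂)
    (hcong : ∀ i, v₁ i - v₂ i ∈ I) :
    ∃ β : Matrix (Fin n) (Fin n) R, IsIsotopicToIdRel R I β ∧ Matrix.vecMul v₂ β = v₁ := by
  classical
  obtain ⟨M₁, ⟨hM₁u, α₁, hα₁u, hα₁0, hα₁1⟩, hvM₁⟩ := hUm v₁ hv₁
  obtain ⟨M₂, ⟨hM₂u, α₂, hα₂u, hα₂0, hα₂1⟩, hvM₂⟩ := hUm v₂ hv₂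
  set h : R →+* R := g.comp (Ideal.Quotient.mk I) with hh
  have hI0 : ∀ a ∈ I, h a = 0 := by
    intro a ha
    show g (Ideal.Quotient.mk I a) = 0
    rw [Ideal.Quotient.eq_zero_iff_mem.mpr ha, map_zero]
  have hmem : ∀ a : R, h a - a ∈ I := by
    intro a
    have := RingHom.congr_fun hg (Ideal.Quotient.mk I a)
    exact Ideal.Quotient.eq.mp this
  set J : Ideal (Polynomial R) := I.map Polynomial.C with hJ
  have hhp : ∀ p : Polynomial R, p.map h - p ∈ J := by
    intro p
    rw [hJ, Ideal.mem_map_C_iff]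
    intro m
    simpa [Polynomial.coeff_map] using hmem (p.coeff m)
  -- ring homs on matrices
  set φ : Matrix (Fin n) (Fin n) (Polynomial R) →+* Matrix (Fin n) (Fin n) (Polynomial R) :=
    (Polynomial.mapRingHom h).mapMatrix with hφ
  set Ev1 : Matrix (Fin n) (Fin n) (Polynomial R) →+* Matrix (Fin n) (Fin n) R :=
    (Polynomial.evalRingHom (1:R)).mapMatrix with hEv1
  set Ev0 : Matrix (Fin n) (Fin n) (Polynomial R) →+* Matrix (Fin n) (Fin n) R :=
    (Polynomial.evalRingHom (0:R)).mapMatrix with hEv0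
  set Q : Matrix (Fin n) (Fin n) (Polynomial R) →+*
      Matrix (Fin n) (Fin n) ((Polynomial R) ⧸ J) :=
    (Ideal.Quotient.mk J).mapMatrix with hQdef
  -- units
  set u₁ : (Matrix (Fin n) (Fin n) (Polynomial R))ˣ := hα₁u.unit with hu₁
  set u₂ : (Matrix (Fin n) (Fin n) (Polynomial R))ˣ := hα₂u.unit with hu₂
  have hu₁c : (↑u₁ : Matrix (Fin n) (Fin n) (Polynomial R)) = α₁ := hα₁u.unit_spec
  have hu₂c : (↑u₂ : Matrix (Fin n) (Fin n) (Polynomial R)) = α₂ := hα₂u.unit_spec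
  set γu : (Matrix (Fin n) (Fin n) (Polynomial R))ˣ :=
    u₂⁻¹ * Units.map φ.toMonoidHom u₂ * (Units.map φ.toMonoidHom u₁)⁻¹ * u₁ with hγu
  set γ : Matrix (Fin n) (Fin n) (Polynomial R) := ↑γu with hγ
  -- mod J : Q γ = 1
  have hQφ : ∀ A, Q (φ A) = Q A := by
    intro A
    ext i j
    simp only [hQdef, hφ, RingHom.mapMatrix_apply, Matrix.map_apply, Polynomial.coe_mapRingHom]
    exact Ideal.Quotient.eq.mpr (hhp (A i j))
  have hQφu : ∀ u : (Matrix (Fin n) (Fin n) (Polynomial R))ˣ,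
      Units.map Q.toMonoidHom (Units.map φ.toMonoidHom u) = Units.map Q.toMonoidHom u := by
    intro u
    refine Units.ext ?_
    simp only [Units.coe_map, MonoidHom.coe_coe]
    exact hQφ _
  have hQγu : Units.map Q.toMonoidHom γu = 1 := by
    rw [hγu, map_mul, map_mul, map_mul, map_inv, map_inv, hQφu, hQφu]
    group
  have hQγ : Q γ = 1 := by
    have := congrArg Units.val hQγu
    exact this
  have hcoeffI : ∀ i j, ∀ m : ℕ,
      (γ i j - (1 : Matrix (Fin n) (Fin n) (Polynomial R)) i j).coeff m ∈ I := by
    intro i j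
    have hmemJ : γ i j - (1 : Matrix (Fin n) (Fin n) (Polynomial R)) i j ∈ J := by
      have h1 : Q γ = Q 1 := by rw [hQγ, map_one]
      have h2 : Ideal.Quotient.mk J (γ i j) =
          Ideal.Quotient.mk J ((1 : Matrix (Fin n) (Fin n) (Polynomial R)) i j) := by
        have := Matrix.ext_iff.mpr h1 i j
        simpa [hQdef, RingHom.mapMatrix_apply, Matrix.map_apply] using this
      exact Ideal.Quotient.eq.mp h2
    rw [hJ, Ideal.mem_map_C_iff] at hmemJ
    exact hmemJ
  -- eval at 0 : Ev0 γ = 1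
  have hEv0φ : ∀ A, Ev0 (φ A) = h.mapMatrix (Ev0 A) := by
    intro A
    ext i j
    simp only [hEv0, hφ, RingHom.mapMatrix_apply, Matrix.map_apply, Polynomial.coe_mapRingHom,
      Polynomial.coe_evalRingHom]
    exact Polynomial.eval_zero_map h (A i j)
  have hEv0u₁ : Units.map Ev0.toMonoidHom u₁ = 1 := by
    refine Units.ext ?_
    simp only [Units.coe_map, MonoidHom.coe_coe, hu₁c, Units.val_one]
    simpa [hEv0, RingHom.mapMatrix_apply, Polynomial.coe_evalRingHom] using hα₁0
  have hEv0u₂ : Units.map Ev0.toMonoidHom u₂ = 1 := by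
    refine Units.ext ?_
    simp only [Units.coe_map, MonoidHom.coe_coe, hu₂c, Units.val_one]
    simpa [hEv0, RingHom.mapMatrix_apply, Polynomial.coe_evalRingHom] using hα₂0
  have hEv0φu₁ : Units.map Ev0.toMonoidHom (Units.map φ.toMonoidHom u₁) = 1 := by
    refine Units.ext ?_
    simp only [Units.coe_map, MonoidHom.coe_coe, Units.val_one]
    show Ev0 (φ ↑u₁) = 1
    rw [hEv0φ]
    have : Ev0 ↑u₁ = 1 := by
      have := congrArg Units.val hEv0u₁
      exact this
    rw [this, map_one]
  have hEv0φu₂ : Units.map Ev0.toMonoidHom (Units.map φ.toMonoidHom u₂) = 1 := by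
    refine Units.ext ?_
    simp only [Units.coe_map, MonoidHom.coe_coe, Units.val_one]
    show Ev0 (φ ↑u₂) = 1
    rw [hEv0φ]
    have : Ev0 ↑u₂ = 1 := by
      have := congrArg Units.val hEv0u₂
      exact this
    rw [this, map_one]
  have hEv0γu : Units.map Ev0.toMonoidHom γu = 1 := by
    rw [hγu, map_mul, map_mul, map_mul, map_inv, map_inv, hEv0u₁, hEv0u₂, hEv0φu₁, hEv0φu₂]
    group
  have hEv0γ : Ev0 γ = 1 := by
    have := congrArg Units.val hEv0γu
    exact this
  have hcoeff0 : ∀ i j,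
      (γ i j - (1 : Matrix (Fin n) (Fin n) (Polynomial R)) i j).coeff 0 = 0 := by
    intro i j
    rw [Polynomial.coeff_zero_eq_eval_zero, Polynomial.eval_sub]
    have h2 : Polynomial.eval 0 (γ i j) = (1 : Matrix (Fin n) (Fin n) R) i j := by
      have := Matrix.ext_iff.mpr hEv0γ i j
      simpa [hEv0, RingHom.mapMatrix_apply, Matrix.map_apply, Polynomial.coe_evalRingHom]
        using this
    rw [h2]
    by_cases hij : i = j <;> simp [Matrix.one_apply, hij]
  -- units over R at eval 1
  set a₁ : (Matrix (Fin n) (Fin n) R)ˣ := Units.map Ev1.toMonoidHom u₁ with ha₁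
  set a₂ : (Matrix (Fin n) (Fin n) R)ˣ := Units.map Ev1.toMonoidHom u₂ with ha₂
  set b₁ : (Matrix (Fin n) (Fin n) R)ˣ :=
    Units.map Ev1.toMonoidHom (Units.map φ.toMonoidHom u₁) with hb₁
  set b₂ : (Matrix (Fin n) (Fin n) R)ˣ :=
    Units.map Ev1.toMonoidHom (Units.map φ.toMonoidHom u₂) with hb₂
  have ha₁c : (↑a₁ : Matrix (Fin n) (Fin n) R) = M₁ := by
    rw [ha₁]
    simp only [Units.coe_map, MonoidHom.coe_coe, hu₁c]
    simpa [hEv1, RingHom.mapMatrix_apply, Polynomial.coe_evalRingHom] using hα₁1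
  have ha₂c : (↑a₂ : Matrix (Fin n) (Fin n) R) = M₂ := by
    rw [ha₂]
    simp only [Units.coe_map, MonoidHom.coe_coe, hu₂c]
    simpa [hEv1, RingHom.mapMatrix_apply, Polynomial.coe_evalRingHom] using hα₂1
  have hEv1φ : ∀ A, Ev1 (φ A) = (Ev1 A).map h := by
    intro A
    ext i j
    simp only [hEv1, hφ, RingHom.mapMatrix_apply, Matrix.map_apply, Polynomial.coe_mapRingHom,
      Polynomial.coe_evalRingHom]
    exact Polynomial.eval_one_map h (A i j)
  have hEv1α₁ : Ev1 (↑u₁) = M₁ := by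
    rw [hu₁c]; simpa [hEv1, RingHom.mapMatrix_apply] using hα₁1
  have hEv1α₂ : Ev1 (↑u₂) = M₂ := by
    rw [hu₂c]; simpa [hEv1, RingHom.mapMatrix_apply] using hα₂1
  have hb₁c : (↑b₁ : Matrix (Fin n) (Fin n) R) = M₁.map h := by
    rw [hb₁]
    simp only [Units.coe_map, MonoidHom.coe_coe]
    show Ev1 (φ ↑u₁) = M₁.map h
    rw [hEv1φ, hEv1α₁]
  have hb₂c : (↑b₂ : Matrix (Fin n) (Fin n) R) = M₂.map h := by
    rw [hb₂]
    simp only [Units.coe_map, MonoidHom.coe_coe]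
    show Ev1 (φ ↑u₂) = M₂.map h
    rw [hEv1φ, hEv1α₂]
  set βu : (Matrix (Fin n) (Fin n) R)ˣ := Units.map Ev1.toMonoidHom γu with hβudef
  have hβu : βu = a₂⁻¹ * b₂ * b₁⁻¹ * a₁ := by
    rw [hβudef, hγu, map_mul, map_mul, map_mul, map_inv, map_inv, ha₁, ha₂, hb₁, hb₂]
  set β : Matrix (Fin n) (Fin n) R := ↑βu with hβ
  have hβeval : γ.map (Polynomial.eval 1) = β := by
    have h1 : γ.map (Polynomial.eval 1) = Ev1 γ := by
      simp [hEv1, RingHom.mapMatrix_apply]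
    rw [h1, hβ, hβudef, hγ]
    simp only [Units.coe_map, MonoidHom.coe_coe]
    rfl
  refine ⟨β, ⟨⟨βu, rfl⟩, ?_, γ, ⟨γu, rfl⟩, fun i j => ⟨hcoeff0 i j, hcoeffI i j⟩, hβeval⟩, ?_⟩
  · -- β ≡ 1 mod I
    intro i j
    have hβ1 : β i j - (1 : Matrix (Fin n) (Fin n) R) i j =
        Polynomial.eval 1 (γ i j - (1 : Matrix (Fin n) (Fin n) (Polynomial R)) i j) := by
      rw [Polynomial.eval_sub]
      have h2 : Polynomial.eval 1 (γ i j) = β i j := by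
        rw [← hβeval]; simp [Matrix.map_apply]
      rw [h2]
      by_cases hij : i = j <;> simp [Matrix.one_apply, hij]
    rw [hβ1]
    set p := γ i j - (1 : Matrix (Fin n) (Fin n) (Polynomial R)) i j with hp
    have hsum : p.eval 1 = p.sum fun _ a => a := by
      rw [Polynomial.eval_eq_sum]
      simp [Polynomial.sum]
    rw [hsum]
    exact Submodule.sum_mem I fun m _ => hcoeffI i j m
  · -- vecMul computation
    have he₁h : (fun i => h (e₁ R n i)) = e₁ R n := by
      funext i
      by_cases hi : (i : ℕ) = 0 <;> simp [e₁, hi]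
    have hv12 : (fun i => h (v₁ i)) = fun i => h (v₂ i) := by
      funext i
      have h0 : h (v₁ i) - h (v₂ i) = 0 := by
        rw [← map_sub]; exact hI0 _ (hcong i)
      exact sub_eq_zero.mp h0
    have key2 : Matrix.vecMul (e₁ R n) (M₂.map h) = Matrix.vecMul (e₁ R n) (M₁.map h) := by
      calc Matrix.vecMul (e₁ R n) (M₂.map h)
          = Matrix.vecMul (fun i => h (e₁ R n i)) (M₂.map h) := by rw [he₁h]
        _ = fun j => h ((Matrix.vecMul (e₁ R n) M₂) j) := vecMul_ringHom_map_aux h _ M₂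
        _ = fun j => h (v₂ j) := by rw [hvM₂]
        _ = fun j => h (v₁ j) := hv12.symm
        _ = fun j => h ((Matrix.vecMul (e₁ R n) M₁) j) := by rw [hvM₁]
        _ = Matrix.vecMul (fun i => h (e₁ R n i)) (M₁.map h) :=
            (vecMul_ringHom_map_aux h _ M₁).symm
        _ = Matrix.vecMul (e₁ R n) (M₁.map h) := by rw [he₁h]
    have hM₂β : M₂ * β = (↑b₂ : Matrix (Fin n) (Fin n) R) * ((↑(b₁⁻¹) : Matrix (Fin n) (Fin n) R) * (↑a₁ : Matrix (Fin n) (Fin n) R)) := by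
      have hgp : a₂ * βu = b₂ * (b₁⁻¹ * a₁) := by rw [hβu]; group
      calc M₂ * β = (↑a₂ : Matrix (Fin n) (Fin n) R) * (↑βu : Matrix (Fin n) (Fin n) R) := by
            rw [ha₂c, hβ]
        _ = ↑(a₂ * βu) := (Units.val_mul _ _).symm
        _ = ↑(b₂ * (b₁⁻¹ * a₁)) := by rw [hgp]
        _ = (↑b₂ : Matrix (Fin n) (Fin n) R) * ((↑(b₁⁻¹) : Matrix (Fin n) (Fin n) R) * (↑a₁ : Matrix (Fin n) (Fin n) R)) := by
            rw [Units.val_mul, Units.val_mul]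
    have hBB : (↑b₁ : Matrix (Fin n) (Fin n) R) * (↑(b₁⁻¹) : Matrix (Fin n) (Fin n) R) = 1 := by
      rw [← Units.val_mul, mul_inv_cancel, Units.val_one]
    calc Matrix.vecMul v₂ β = Matrix.vecMul (Matrix.vecMul (e₁ R n) M₂) β := by rw [hvM₂]
      _ = Matrix.vecMul (e₁ R n) (M₂ * β) := Matrix.vecMul_vecMul _ _ _
      _ = Matrix.vecMul (e₁ R n) ((↑b₂ : Matrix (Fin n) (Fin n) R) *
            ((↑(b₁⁻¹) : Matrix (Fin n) (Fin n) R) * (↑a₁ : Matrix (Fin n) (Fin n) R))) := by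
            rw [hM₂β]
      _ = Matrix.vecMul (Matrix.vecMul (Matrix.vecMul (e₁ R n)
            (↑b₂ : Matrix (Fin n) (Fin n) R)) (↑(b₁⁻¹) : Matrix (Fin n) (Fin n) R))
            (↑a₁ : Matrix (Fin n) (Fin n) R) := by
            simp only [Matrix.vecMul_vecMul, mul_assoc]
      _ = Matrix.vecMul (Matrix.vecMul (Matrix.vecMul (e₁ R n)
            (↑b₁ : Matrix (Fin n) (Fin n) R)) (↑(b₁⁻¹) : Matrix (Fin n) (Fin n) R))
            (↑a₁ : Matrix (Fin n) (Fin n) R) := by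
            rw [hb₂c, key2, ← hb₁c]
      _ = Matrix.vecMul (Matrix.vecMul (e₁ R n) ((↑b₁ : Matrix (Fin n) (Fin n) R) *
            (↑(b₁⁻¹) : Matrix (Fin n) (Fin n) R))) (↑a₁ : Matrix (Fin n) (Fin n) R) := by
            simp only [Matrix.vecMul_vecMul, mul_assoc]
      _ = Matrix.vecMul (e₁ R n) (↑a₁ : Matrix (Fin n) (Fin n) R) := by
            rw [hBB, Matrix.vecMul_one]
      _ = v₁ := by rw [ha₁c, hvM₁]
end
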